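/- arXiv:0708.0055 — 5 statements merged into one kernel-verified Lean document; each statement's English description precedes it below -/
import Mathlib

section
/- Let X be a separable nontrivial real or complex Banach space such that every P ∈ 𝒫(ᵏX : X) is a limit of strongly norm-attaining polynomials (e.g., X has the Radon–Nikodým property). Then n^(k)(X) = 1 if and only if |x*(x)| = 1 for every x ∈ ρ̃𝒫(ᵏX) and every weak-* exposed point x* of B_{X*}. -/
open Metric Filter Topology Set

/-- The sup norm of a function over the closed unit ball. -/
noncomputable def supNorm {X Y : Type*} [NormedAddCommGroup X] [NormedAddCommGroup Y]
    (f : X → Y) : ℝ :=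
  sSup ((fun x => ‖f x‖) '' Metric.closedBall (0 : X) 1)

/-- `f` strongly attains its (sup) norm at `x₀`: every maximizing sequence in the closed unit
ball has a subsequence converging to a unimodular multiple of `x₀`. -/
def StronglyAttains (𝕂 : Type*) [RCLike 𝕂] {X Y : Type*} [NormedAddCommGroup X]
    [NormedSpace 𝕂 X] [NormedAddCommGroup Y] (f : X → Y) (x₀ : X) : Prop :=
  ∀ xs : ℕ → X, (∀ n, xs n ∈ Metric.closedBall (0 : X) 1) →
    Tendsto (fun n => ‖f (xs n)‖) atTop (nhds (supNorm f)) →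
    ∃ (α : 𝕂) (φ : ℕ → ℕ), StrictMono φ ∧ ‖α‖ = 1 ∧
      Tendsto (fun n => xs (φ n)) atTop (nhds (α • x₀))

/-- The `k`-homogeneous polynomial associated to a continuous `k`-multilinear map. -/
noncomputable def polyEval {𝕂 : Type*} [RCLike 𝕂] {X Y : Type*} [NormedAddCommGroup X]
    [NormedSpace 𝕂 X] [NormedAddCommGroup Y] [NormedSpace 𝕂 Y] {k : ℕ}
    (L : ContinuousMultilinearMap 𝕂 (fun _ : Fin k => X) Y) : X → Y :=
  fun x => L (fun _ => x)

/-- The set `ρ̃𝒫(ᵏX)` of points of the closed unit ball at which some nonzero bounded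
`k`-homogeneous scalar polynomial strongly attains its norm. -/
def polyAttainPts (𝕂 : Type*) [RCLike 𝕂] (X : Type*) [NormedAddCommGroup X]
    [NormedSpace 𝕂 X] (k : ℕ) : Set X :=
  {x₀ | x₀ ∈ Metric.closedBall (0 : X) 1 ∧
    ∃ L : ContinuousMultilinearMap 𝕂 (fun _ : Fin k => X) 𝕂,
      polyEval L ≠ 0 ∧ StronglyAttains 𝕂 (polyEval L) x₀}

/-- Numerical radius `v(f) = sup { |x*(f x)| : (x, x*) ∈ Π(X) }`. -/
noncomputable def numRadius (𝕂 : Type*) [RCLike 𝕂] {X : Type*} [NormedAddCommGroup X]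
    [NormedSpace 𝕂 X] (f : X → X) : ℝ :=
  sSup {r | ∃ (x : X) (x' : X →L[𝕂] 𝕂), ‖x‖ = 1 ∧ ‖x'‖ = 1 ∧ x' x = 1 ∧ r = ‖x' (f x)‖}

/-- The `k`-polynomial numerical index `n^(k)(X)`. -/
noncomputable def polyNumIndex (𝕂 : Type*) [RCLike 𝕂] (X : Type*) [NormedAddCommGroup X]
    [NormedSpace 𝕂 X] (k : ℕ) : ℝ :=
  sInf {r | ∃ L : ContinuousMultilinearMap 𝕂 (fun _ : Fin k => X) X,
    supNorm (polyEval L) = 1 ∧ r = numRadius 𝕂 (polyEval L)}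

/-- The numerical index `n(X)` of a Banach space. -/
noncomputable def numIndex (𝕂 : Type*) [RCLike 𝕂] (X : Type*) [NormedAddCommGroup X]
    [NormedSpace 𝕂 X] : ℝ :=
  sInf {r | ∃ T : X →L[𝕂] X, ‖T‖ = 1 ∧ r = numRadius 𝕂 (⇑T)}

/-- `x` is an extreme point of the convex set `s` : `y + z = 2x` with `y, z ∈ s` forces
`y = z = x`. -/
def IsExtremePt {E : Type*} [AddCommGroup E] (s : Set E) (x : E) : Prop :=
  x ∈ s ∧ ∀ y ∈ s, ∀ z ∈ s, y + z = x + x → y = x ∧ z = x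

/-- `x` is a strongly exposed point of the closed unit ball. -/
def StronglyExposedPt (𝕂 : Type*) [RCLike 𝕂] {X : Type*} [NormedAddCommGroup X]
    [NormedSpace 𝕂 X] (x : X) : Prop :=
  x ∈ Metric.closedBall (0 : X) 1 ∧ ∃ x' : X →L[𝕂] 𝕂, x' ≠ 0 ∧ ‖x'‖ ≤ 1 ∧
    (∀ y ∈ Metric.closedBall (0 : X) 1, RCLike.re (x' y) ≤ RCLike.re (x' x)) ∧
    ∀ xs : ℕ → X, (∀ n, xs n ∈ Metric.closedBall (0 : X) 1) →
      Tendsto (fun n => RCLike.re (x' (xs n))) atTop (nhds (RCLike.re (x' x))) →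
      Tendsto xs atTop (nhds x)

/-- `x'` is a weak-* exposed point of the dual unit ball. -/
def WeakStarExposed (𝕂 : Type*) [RCLike 𝕂] {X : Type*} [NormedAddCommGroup X]
    [NormedSpace 𝕂 X] (x' : X →L[𝕂] 𝕂) : Prop :=
  ‖x'‖ ≤ 1 ∧ ∃ x ∈ Metric.closedBall (0 : X) 1, x' x = 1 ∧
    ∀ y' : X →L[𝕂] 𝕂, ‖y'‖ ≤ 1 → y' x = 1 → y' = x'

/-- `f` is a strong peak function at `x₀`: `f` is nonzero on the ball and every maximizing
sequence in the closed unit ball converges to `x₀`. -/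
def StrongPeakAt {X Y : Type*} [NormedAddCommGroup X] [NormedAddCommGroup Y]
    (f : X → Y) (x₀ : X) : Prop :=
  (∃ x ∈ Metric.closedBall (0 : X) 1, f x ≠ 0) ∧
    ∀ xs : ℕ → X, (∀ n, xs n ∈ Metric.closedBall (0 : X) 1) →
      Tendsto (fun n => ‖f (xs n)‖) atTop (nhds (supNorm f)) →
      Tendsto xs atTop (nhds x₀)

/-- Complex extreme point of the closed unit ball. -/
def ComplexExtremePoint {X : Type*} [NormedAddCommGroup X] [NormedSpace ℂ X] (x : X) : Prop :=
  x ∈ Metric.closedBall (0 : X) 1 ∧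
    ∀ y : X, (∀ θ : ℝ, ‖x + Complex.exp (θ * Complex.I) • y‖ ≤ 1) → y = 0

/-- Membership in `A_b(B_X : Y)`: bounded, continuous on the closed unit ball and
holomorphic on the open unit ball. -/
def MemAb {X Y : Type*} [NormedAddCommGroup X] [NormedSpace ℂ X] [NormedAddCommGroup Y]
    [NormedSpace ℂ Y] (f : X → Y) : Prop :=
  ContinuousOn f (Metric.closedBall (0 : X) 1) ∧
    (∃ C, ∀ x ∈ Metric.closedBall (0 : X) 1, ‖f x‖ ≤ C) ∧
    DifferentiableOn ℂ f (Metric.ball (0 : X) 1)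

/-- Membership in `A_u(B_X : Y)`: additionally uniformly continuous on the closed ball. -/
def MemAu {X Y : Type*} [NormedAddCommGroup X] [NormedSpace ℂ X] [NormedAddCommGroup Y]
    [NormedSpace ℂ Y] (f : X → Y) : Prop :=
  MemAb f ∧ UniformContinuousOn f (Metric.closedBall (0 : X) 1)

/-- The set `ρA_u(B_X)` of strong peak points of `A_u(B_X)`. -/
def strongPeakPtsAu (X : Type*) [NormedAddCommGroup X] [NormedSpace ℂ X] : Set X :=
  {x₀ | ∃ f : X → ℂ, MemAu f ∧ StrongPeakAt f x₀}

/-- The holomorphic numerical index `n_u(X)`. -/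
noncomputable def holNumIndex (X : Type*) [NormedAddCommGroup X] [NormedSpace ℂ X] : ℝ :=
  sInf {r | ∃ f : X → X, MemAu f ∧ supNorm f = 1 ∧ r = numRadius ℂ f}
section AUX
section basic
variable {X Y : Type*} [NormedAddCommGroup X] [NormedAddCommGroup Y] {f : X → Y}

lemma supNorm_nonneg (f : X → Y) : 0 ≤ supNorm f :=
  Real.sSup_nonneg (by rintro r ⟨x, -, rfl⟩; positivity)

lemma norm_le_supNorm (hb : BddAbove ((fun x => ‖f x‖) '' Metric.closedBall (0 : X) 1))
    {x : X} (hx : x ∈ Metric.closedBall (0 : X) 1) : ‖f x‖ ≤ supNorm f :=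
  le_csSup hb ⟨x, hx, rfl⟩

lemma supNorm_le {C : ℝ} (hC : 0 ≤ C) (h : ∀ x ∈ Metric.closedBall (0 : X) 1, ‖f x‖ ≤ C) :
    supNorm f ≤ C :=
  Real.sSup_le (by rintro r ⟨x, hx, rfl⟩; exact h x hx) hC

lemma exists_near_supNorm {c : ℝ} (hc : c < supNorm f) :
    ∃ x ∈ Metric.closedBall (0 : X) 1, c < ‖f x‖ := by
  obtain ⟨r, ⟨x, hx, rfl⟩, hr⟩ := exists_lt_of_lt_csSup
    (⟨‖f 0‖, ⟨0, by simp, rfl⟩⟩ : ((fun x => ‖f x‖) '' Metric.closedBall (0 : X) 1).Nonempty) hc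
  exact ⟨x, hx, hr⟩

end basic

section poly
variable {𝕂 X Y : Type*} [RCLike 𝕂] [NormedAddCommGroup X] [NormedSpace 𝕂 X]
  [NormedAddCommGroup Y] [NormedSpace 𝕂 Y] {k : ℕ}
  (L : ContinuousMultilinearMap 𝕂 (fun _ : Fin k => X) Y)

lemma polyEval_bdd :
    BddAbove ((fun x => ‖polyEval L x‖) '' Metric.closedBall (0 : X) 1) := by
  refine ⟨‖L‖, ?_⟩
  rintro r ⟨x, hx, rfl⟩
  calc ‖polyEval L x‖ ≤ ‖L‖ * ∏ _i : Fin k, ‖x‖ := L.le_opNorm _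
    _ ≤ ‖L‖ * 1 := by
        refine mul_le_mul_of_nonneg_left ?_ (norm_nonneg _)
        refine Finset.prod_le_one (fun _ _ => norm_nonneg _) (fun _ _ => ?_)
        simpa using mem_closedBall_zero_iff.mp hx
    _ = ‖L‖ := mul_one _

lemma polyEval_continuous : Continuous (polyEval L) :=
  L.coe_continuous.comp (continuous_pi fun _ => continuous_id)

lemma polyEval_smul_arg (c : 𝕂) (x : X) :
    polyEval L (c • x) = (c ^ k) • polyEval L x := by
  have := L.map_smul_univ (fun _ => c) (fun _ => x)
  simpa [polyEval, Finset.prod_const] using this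

lemma polyEval_smul (c : 𝕂) (x : X) : polyEval (c • L) x = c • polyEval L x := rfl

lemma polyEval_smulRight (f : ContinuousMultilinearMap 𝕂 (fun _ : Fin k => X) 𝕂) (z : Y) (x : X) :
    polyEval (f.smulRight z) x = polyEval f x • z := rfl

end poly

section s3
variable {𝕂 X Y : Type*} [RCLike 𝕂] [NormedAddCommGroup X] [NormedSpace 𝕂 X]
  [NormedAddCommGroup Y] [NormedSpace 𝕂 Y]

lemma supNorm_smul_eq {f : X → 𝕂} {g : X → Y} {c : ℝ} (hc : 0 ≤ c)
    (hb : BddAbove ((fun x => ‖f x‖) '' Metric.closedBall (0 : X) 1))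
    (hfg : ∀ x, ‖g x‖ = c * ‖f x‖) : supNorm g = c * supNorm f := by
  have himg : (fun x => ‖g x‖) '' Metric.closedBall (0 : X) 1
      = (fun r => c * r) '' ((fun x => ‖f x‖) '' Metric.closedBall (0 : X) 1) := by
    rw [Set.image_image]; exact Set.image_congr fun x _ => hfg x
  have hmono : Monotone (fun r : ℝ => c * r) := fun a b hab => by
    exact mul_le_mul_of_nonneg_left hab hc
  have h2 := hmono.map_csSup_of_continuousAt (A := (fun x => ‖f x‖) '' Metric.closedBall (0 : X) 1)
    ((continuous_const.mul continuous_id).continuousAt)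
    ⟨‖f 0‖, ⟨0, by simp, rfl⟩⟩ hb
  simp only [Pi.mul_def, id] at h2
  rw [supNorm, himg, ← h2]; rfl

lemma exists_maximizing_seq {f : X → Y}
    (hb : BddAbove ((fun x => ‖f x‖) '' Metric.closedBall (0 : X) 1)) :
    ∃ xs : ℕ → X, (∀ n, xs n ∈ Metric.closedBall (0 : X) 1) ∧
      Tendsto (fun n => ‖f (xs n)‖) atTop (nhds (supNorm f)) := by
  have hne : ((fun x => ‖f x‖) '' Metric.closedBall (0 : X) 1).Nonempty := ⟨‖f 0‖, ⟨0, by simp, rfl⟩⟩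
  have key : ∀ n : ℕ, ∃ x, x ∈ Metric.closedBall (0 : X) 1 ∧
      supNorm f - 1/(n+1) < ‖f x‖ := by
    intro n
    obtain ⟨r, ⟨x, hx, rfl⟩, hr⟩ := exists_lt_of_lt_csSup hne
      (show supNorm f - 1/(n+1) < supNorm f by
        have : (0:ℝ) < 1/(n+1) := by positivity
        linarith)
    exact ⟨x, hx, hr⟩
  choose xs hxs hlt using key
  refine ⟨xs, hxs, ?_⟩
  have hub : ∀ n, ‖f (xs n)‖ ≤ supNorm f := fun n => le_csSup hb ⟨xs n, hxs n, rfl⟩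
  refine tendsto_of_tendsto_of_tendsto_of_le_of_le (g := fun n : ℕ => supNorm f - 1/(n+1))
    (h := fun _ => supNorm f) ?_ tendsto_const_nhds (fun n => (hlt n).le) hub
  have : Tendsto (fun n : ℕ => 1/((n:ℝ)+1)) atTop (nhds 0) := tendsto_one_div_add_atTop_nhds_zero_nat
  simpa using tendsto_const_nhds.sub this

end s3

private lemma ladder_aux {A B c : ℝ} (σ : ℕ → ℝ) (n : ℕ)
    (hstep : ∀ i < n, σ i + c ≤ σ (i+1)) (h0 : A ≤ σ 0) (hn : σ n ≤ B) :
    A + n*c ≤ B := by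
  have key : ∀ i ≤ n, A + i*c ≤ σ i := by
    intro i
    induction i with
    | zero => intro _; simpa using h0
    | succ j ih =>
      intro hj
      have h1 := hstep j (by omega)
      have h2 := ih (by omega)
      push_cast
      nlinarith
  have := key n le_rfl
  linarith

lemma slope_ladder (φ : ℝ → ℝ) (hφ : ConvexOn ℝ Set.univ φ) {c ε : ℝ}
    (hc : 0 < c) (hε : 0 < ε) :
    ∃ t : ℝ, |t| < ε ∧ ∃ δ : ℝ, 0 < δ ∧ φ (t+δ) + φ (t-δ) - 2*φ t < c*δ := by
  by_contra hcon
  push_neg at hcon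
  set A := (φ (-(ε/2)) - φ (-ε))/(ε/2) with hA
  set B := (φ ε - φ (ε/2))/(ε/2) with hB
  obtain ⟨N, hN⟩ := exists_nat_gt ((B - A)/c)
  set M : ℝ := ((2*N+2 : ℕ) : ℝ) with hM
  have hM0 : (0:ℝ) < M := by rw [hM]; positivity
  set h : ℝ := ε/M with hh
  have hh0 : 0 < h := by rw [hh]; positivity
  have hMh : M*h = ε := by rw [hh]; field_simp
  set t : ℕ → ℝ := fun i => -(ε/2) + (i:ℝ)*h with ht
  set σ : ℕ → ℝ := fun i => (φ (t (i+1)) - φ (t i))/h with hσ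
  have htmono : ∀ i : ℕ, t i < t (i+1) := by
    intro i; simp only [ht]; push_cast; nlinarith
  have htbound : ∀ i : ℕ, i ≤ 2*N+2 → -(ε/2) ≤ t i ∧ t i ≤ ε/2 := by
    intro i hi
    have hiM : (i:ℝ) ≤ M := by rw [hM]; exact_mod_cast hi
    have hi0 : (0:ℝ) ≤ (i:ℝ) := Nat.cast_nonneg i
    constructor
    · simp only [ht]; nlinarith
    · simp only [ht]
      have : (i:ℝ)*h ≤ M*h := by nlinarith
      nlinarith
  have hend : t (2*N+2) = ε/2 := by
    have : ((2*N+2:ℕ):ℝ) * h = ε := by rw [← hM]; exact hMh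
    simp only [ht]
    push_cast at this ⊢
    linarith
  have step : ∀ i : ℕ, i < 2*N+1 → σ i + c ≤ σ (i+1) := by
    intro i hi
    have hb := htbound (i+1) (by omega)
    have habs : |t (i+1)| < ε :=
      lt_of_le_of_lt (abs_le.mpr ⟨hb.1, hb.2⟩) (by linarith)
    have key := hcon (t (i+1)) habs h hh0
    have e1 : t (i+1) + h = t (i+2) := by simp only [ht]; push_cast; ring
    have e2 : t (i+1) - h = t i := by simp only [ht]; push_cast; ring
    rw [e1, e2] at key
    have hdiv : c ≤ (φ (t (i+2)) + φ (t i) - 2*φ (t (i+1)))/h :=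
      (le_div_iff₀ hh0).2 (by linarith)
    have hσd : σ (i+1) - σ i = (φ (t (i+2)) + φ (t i) - 2*φ (t (i+1)))/h := by
      simp only [hσ]
      rw [show i+1+1 = i+2 by omega]
      ring
    linarith
  have lower : A ≤ σ 0 := by
    have h0 : t 0 = -(ε/2) := by simp [ht]
    have key := hφ.slope_mono_adjacent (Set.mem_univ (-ε)) (Set.mem_univ (t 1))
      (show -ε < t 0 by rw [h0]; linarith) (htmono 0)
    rw [h0] at key
    have e3 : -(ε/2) - -ε = ε/2 := by ring
    rw [e3] at key
    simp only [hσ, hA, h0]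
    have e4 : t 1 - -(ε/2) = h := by simp only [ht]; push_cast; ring
    rw [e4] at key
    exact key
  have upper : σ (2*N+1) ≤ B := by
    have key := hφ.slope_mono_adjacent (Set.mem_univ (t (2*N+1))) (Set.mem_univ ε)
      (htmono (2*N+1))
      (show t (2*N+1+1) < ε by rw [show 2*N+1+1 = 2*N+2 by omega, hend]; linarith)
    rw [show 2*N+1+1 = 2*N+2 by omega, hend] at key
    have e5 : ε/2 - t (2*N+1) = h := by
      have h2 : ((2*N+2:ℕ):ℝ) * h = ε := by rw [← hM]; exact hMh
      simp only [ht]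
      push_cast at h2 ⊢
      nlinarith
    have e6 : ε - ε/2 = ε/2 := by ring
    rw [e5, e6] at key
    simp only [hσ, hB]
    rw [show 2*N+1+1 = 2*N+2 by omega, hend]
    exact key
  have hfin := ladder_aux σ (2*N+1) step lower upper
  have hNc : B - A < N*c := (div_lt_iff₀ hc).1 hN
  have hcast : (N:ℝ) ≤ ((2*N+1 : ℕ):ℝ) := by push_cast; linarith [Nat.cast_nonneg (α := ℝ) N]
  nlinarith [mul_le_mul_of_nonneg_right hcast hc.le]

section mazur
variable {𝕂 X : Type*} [RCLike 𝕂] [NormedAddCommGroup X] [NormedSpace 𝕂 X]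

/-- The "approximately smooth in direction v at scale 1/(m+1)" open set. -/
def smoothSet (𝕂 : Type*) [RCLike 𝕂] {X : Type*} [NormedAddCommGroup X] [NormedSpace 𝕂 X]
    (v : X) (m : ℕ) : Set X :=
  {x | ∃ δ : ℝ, 0 < δ ∧
    ‖x + ((δ:𝕂))•v‖ + ‖x - ((δ:𝕂))•v‖ - 2*‖x‖ < δ/(m+1)}

lemma isOpen_smoothSet (v : X) (m : ℕ) : IsOpen (smoothSet 𝕂 v m) := by
  have : smoothSet 𝕂 v m = ⋃ δ ∈ Set.Ioi (0:ℝ),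
      {x : X | ‖x + ((δ:𝕂))•v‖ + ‖x - ((δ:𝕂))•v‖ - 2*‖x‖ < δ/(m+1)} := by
    ext x
    simp only [smoothSet, Set.mem_setOf_eq, Set.mem_iUnion, Set.mem_Ioi, exists_prop]
  rw [this]
  refine isOpen_biUnion fun δ _ => ?_
  refine isOpen_lt ?_ continuous_const
  fun_prop

lemma convexOn_dir (x₀ v : X) :
    ConvexOn ℝ Set.univ (fun s : ℝ => ‖x₀ + ((s:𝕂))•v‖) := by
  refine ⟨convex_univ, ?_⟩
  intro p _ q _ a b ha hb hab
  have hab' : ((a:𝕂)) + ((b:𝕂)) = 1 := by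
    have := congrArg (fun r : ℝ => ((r:𝕂))) hab
    push_cast at this; simpa using this
  have hid : x₀ + (((a • p + b • q : ℝ) : 𝕂))•v
      = (a:𝕂)•(x₀ + ((p:𝕂))•v) + (b:𝕂)•(x₀ + ((q:𝕂))•v) := by
    have h0 : x₀ = ((a:𝕂) + (b:𝕂)) • x₀ := by rw [hab', one_smul]
    simp only [smul_eq_mul]
    push_cast
    rw [smul_add, smul_add, smul_smul, smul_smul]
    nth_rewrite 1 [h0]
    rw [add_smul, add_smul]
    abel
  simp only []
  rw [hid]
  calc ‖(a:𝕂)•(x₀ + ((p:𝕂))•v) + (b:𝕂)•(x₀ + ((q:𝕂))•v)‖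
      ≤ ‖(a:𝕂)•(x₀ + ((p:𝕂))•v)‖ + ‖(b:𝕂)•(x₀ + ((q:𝕂))•v)‖ := norm_add_le _ _
    _ = a * ‖x₀ + ((p:𝕂))•v‖ + b * ‖x₀ + ((q:𝕂))•v‖ := by
        rw [norm_smul, norm_smul, RCLike.norm_ofReal, RCLike.norm_ofReal,
          abs_of_nonneg ha, abs_of_nonneg hb]
    _ = a • ‖x₀ + ((p:𝕂))•v‖ + b • ‖x₀ + ((q:𝕂))•v‖ := rfl

lemma dense_smoothSet (v : X) (m : ℕ) : Dense (smoothSet 𝕂 v m) := by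
  rw [Metric.dense_iff]
  intro x₀ r hr
  have hc : (0:ℝ) < 1/(m+1) := by positivity
  have hε : (0:ℝ) < r/(‖v‖+1) := by positivity
  obtain ⟨t, htabs, δ, hδ, hlt⟩ := slope_ladder _ (convexOn_dir (𝕂 := 𝕂) x₀ v) hc hε
  refine ⟨x₀ + ((t:𝕂))•v, ?_, ?_⟩
  · rw [Metric.mem_ball, dist_eq_norm]
    have : x₀ + ((t:𝕂))•v - x₀ = ((t:𝕂))•v := by abel
    rw [this, norm_smul, RCLike.norm_ofReal]
    calc |t| * ‖v‖ ≤ |t| * (‖v‖+1) := by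
          refine mul_le_mul_of_nonneg_left (by linarith) (abs_nonneg t)
      _ < (r/(‖v‖+1)) * (‖v‖+1) := by
          refine mul_lt_mul_of_pos_right htabs (by positivity)
      _ = r := by field_simp
  · refine ⟨δ, hδ, ?_⟩
    have e1 : x₀ + ((t:𝕂))•v + ((δ:𝕂))•v = x₀ + (((t+δ:ℝ)):𝕂)•v := by
      push_cast; rw [add_smul]; abel
    have e2 : x₀ + ((t:𝕂))•v - ((δ:𝕂))•v = x₀ + (((t-δ:ℝ)):𝕂)•v := by
      push_cast; rw [sub_smul]; abel
    rw [e1, e2]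
    calc ‖x₀ + (((t+δ:ℝ)):𝕂)•v‖ + ‖x₀ + (((t-δ:ℝ)):𝕂)•v‖ - 2*‖x₀ + ((t:𝕂))•v‖
        < (1/(m+1))*δ := hlt
      _ = δ/(m+1) := by ring

/-- At a point of all the smoothSets, the norming functional is unique. -/
lemma unique_norming {v : ℕ → X} (hv : DenseRange v) {x : X}
    (hx : ∀ n m : ℕ, x ∈ smoothSet 𝕂 (v n) m)
    (f g : X →L[𝕂] 𝕂) (hf1 : ‖f‖ ≤ 1) (hg1 : ‖g‖ ≤ 1)
    (hfx : f x = (‖x‖ : 𝕂)) (hgx : g x = (‖x‖ : 𝕂)) : f = g := by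
  have hre : ∀ w : X, RCLike.re (f w) - RCLike.re (g w) ≤ 0 := by
    have hseq : ∀ n : ℕ, RCLike.re (f (v n)) - RCLike.re (g (v n)) ≤ 0 := by
      intro n
      by_contra hpos
      push_neg at hpos
      obtain ⟨m, hm⟩ := exists_nat_one_div_lt hpos
      obtain ⟨δ, hδ, hlt⟩ := hx n m
      have hfb : RCLike.re (f (x + ((δ:𝕂))•(v n))) ≤ ‖x + ((δ:𝕂))•(v n)‖ := by
        refine le_trans (RCLike.re_le_norm _) ?_
        calc ‖f (x + ((δ:𝕂))•(v n))‖ ≤ ‖f‖ * ‖x + ((δ:𝕂))•(v n)‖ := f.le_opNorm _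
          _ ≤ 1 * ‖x + ((δ:𝕂))•(v n)‖ := by
              exact mul_le_mul_of_nonneg_right hf1 (norm_nonneg _)
          _ = _ := one_mul _
      have hgb : RCLike.re (g (x - ((δ:𝕂))•(v n))) ≤ ‖x - ((δ:𝕂))•(v n)‖ := by
        refine le_trans (RCLike.re_le_norm _) ?_
        calc ‖g (x - ((δ:𝕂))•(v n))‖ ≤ ‖g‖ * ‖x - ((δ:𝕂))•(v n)‖ := g.le_opNorm _
          _ ≤ 1 * ‖x - ((δ:𝕂))•(v n)‖ := by
              exact mul_le_mul_of_nonneg_right hg1 (norm_nonneg _)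
          _ = _ := one_mul _
      have hfe : RCLike.re (f (x + ((δ:𝕂))•(v n)))
          = ‖x‖ + δ * RCLike.re (f (v n)) := by
        rw [map_add, map_smul, smul_eq_mul]
        rw [map_add, hfx]
        simp [RCLike.re_ofReal_mul]
      have hge : RCLike.re (g (x - ((δ:𝕂))•(v n)))
          = ‖x‖ - δ * RCLike.re (g (v n)) := by
        rw [map_sub, map_smul, smul_eq_mul]
        rw [map_sub, hgx]
        simp [RCLike.re_ofReal_mul]
      have h1 : δ * (RCLike.re (f (v n)) - RCLike.re (g (v n))) ≤
          ‖x + ((δ:𝕂))•(v n)‖ + ‖x - ((δ:𝕂))•(v n)‖ - 2*‖x‖ := by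
        nlinarith [hfb, hgb]
      have h2 : δ * (RCLike.re (f (v n)) - RCLike.re (g (v n))) < δ * (1/(m+1)) := by
        calc δ * (RCLike.re (f (v n)) - RCLike.re (g (v n))) ≤ _ := h1
          _ < δ/(m+1) := hlt
          _ = δ * (1/(m+1)) := by ring
      have h3 : RCLike.re (f (v n)) - RCLike.re (g (v n)) < 1/(m+1) :=
        lt_of_mul_lt_mul_left h2 hδ.le
      linarith
    have hclosed : IsClosed {w : X | RCLike.re (f w) - RCLike.re (g w) ≤ 0} := by
      refine isClosed_le ?_ continuous_const
      exact (RCLike.continuous_re.comp f.continuous).sub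
        (RCLike.continuous_re.comp g.continuous)
    have hsub : Set.range v ⊆ {w : X | RCLike.re (f w) - RCLike.re (g w) ≤ 0} := by
      rintro _ ⟨n, rfl⟩; exact hseq n
    intro w
    have : closure (Set.range v) ⊆ {w : X | RCLike.re (f w) - RCLike.re (g w) ≤ 0} :=
      hclosed.closure_subset_iff.mpr hsub
    have hw : w ∈ closure (Set.range v) := by
      rw [hv.closure_range]; trivial
    exact this hw
  have hre' : ∀ w : X, RCLike.re (f w) = RCLike.re (g w) := by
    intro w
    have h1 := hre w
    have h2 := hre (-w)
    rw [map_neg, map_neg] at h2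
    simp only [map_neg] at h2
    linarith
  ext w
  have hz : RCLike.re (f w - g w) = 0 := by
    simp only [map_sub]; rw [hre' w]; ring
  have hzI : RCLike.re ((RCLike.I : 𝕂) * (f w - g w)) = 0 := by
    have : (RCLike.I : 𝕂) * (f w - g w) = f ((RCLike.I : 𝕂) • w) - g ((RCLike.I : 𝕂) • w) := by
      rw [map_smul, map_smul, smul_eq_mul, smul_eq_mul, mul_sub]
    rw [this]; simp only [map_sub]; rw [hre']; ring
  have him : RCLike.im (f w - g w) = 0 := by
    rw [RCLike.I_mul_re] at hzI; linarith
  have : f w - g w = 0 := RCLike.ext (by simp [hz]) (by simp [him])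
  exact sub_eq_zero.mp this

end mazur

section mazur2
variable {𝕂 X : Type*} [RCLike 𝕂] [NormedAddCommGroup X] [NormedSpace 𝕂 X]

lemma exists_weakStarExposed_norming [CompleteSpace X] [Nontrivial X]
    [TopologicalSpace.SeparableSpace X] (u : X) (hu : u ≠ 0) {η : ℝ} (hη : 0 < η) :
    ∃ x' : X →L[𝕂] 𝕂, WeakStarExposed 𝕂 x' ∧ ‖u‖ - η ≤ ‖x' u‖ := by
  have hne : Nonempty X := ⟨0⟩
  set v := TopologicalSpace.denseSeq X with hvdef
  have hv := TopologicalSpace.denseRange_denseSeq X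
  have hG : Dense (⋂ p : ℕ × ℕ, smoothSet 𝕂 (v p.1) p.2) :=
    dense_iInter_of_isOpen (fun p => isOpen_smoothSet _ _) (fun p => dense_smoothSet _ _)
  have hunorm : 0 < ‖u‖ := norm_pos_iff.mpr hu
  set r := min (η/2) (‖u‖/2) with hrdef
  have hr : 0 < r := lt_min (by linarith) (by linarith)
  obtain ⟨x, hxball, hxG⟩ := Metric.dense_iff.1 hG u r hr
  have hxu : ‖x - u‖ < r := by rwa [Metric.mem_ball, dist_eq_norm] at hxball
  have hxnorm : ‖u‖ - r ≤ ‖x‖ := by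
    have := norm_sub_norm_le u x
    rw [norm_sub_rev] at this
    linarith
  have hx0 : x ≠ 0 := by
    refine norm_pos_iff.mp ?_
    have : r ≤ ‖u‖/2 := min_le_right _ _
    linarith
  obtain ⟨f, hf1, hfx⟩ := exists_dual_vector 𝕂 x (norm_ne_zero_iff.mpr hx0)
  have hxsm : ∀ n m : ℕ, x ∈ smoothSet 𝕂 (v n) m := by
    intro n m
    have := Set.mem_iInter.mp hxG (n, m)
    exact this
  set s : X := ((‖x‖⁻¹ : ℝ) : 𝕂) • x with hsdef
  have hnx : (‖x‖ : ℝ) ≠ 0 := norm_ne_zero_iff.mpr hx0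
  have hfs : f s = 1 := by
    rw [hsdef, map_smul, smul_eq_mul, hfx, ← RCLike.ofReal_mul, inv_mul_cancel₀ hnx,
      RCLike.ofReal_one]
  have hsnorm : ‖s‖ = 1 := by
    rw [hsdef, norm_smul, RCLike.norm_ofReal, abs_of_nonneg (by positivity)]
    field_simp
  have hxs : ((‖x‖ : ℝ) : 𝕂) • s = x := by
    rw [hsdef, smul_smul, ← RCLike.ofReal_mul, mul_inv_cancel₀ hnx, RCLike.ofReal_one, one_smul]
  refine ⟨f, ⟨hf1.le, s, ?_, hfs, ?_⟩, ?_⟩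
  · rw [Metric.mem_closedBall, dist_zero_right, hsnorm]
  · intro y' hy'1 hy's
    have hy'x : y' x = (‖x‖ : 𝕂) := by
      conv_lhs => rw [← hxs]
      rw [map_smul, smul_eq_mul, hy's, mul_one]
    exact unique_norming hv hxsm y' f hy'1 hf1.le hy'x hfx
  · have h1 : RCLike.re (f u) ≥ ‖x‖ - ‖u - x‖ := by
      have : f u = f x + f (u - x) := by rw [← map_add]; congr 1; abel
      rw [this]
      simp only [map_add]
      have h2 : RCLike.re (f x) = ‖x‖ := by rw [hfx]; simp
      have h3 : -‖u - x‖ ≤ RCLike.re (f (u - x)) := by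
        have := RCLike.re_le_norm (-(f (u - x)))
        simp only [map_neg, norm_neg] at this
        have hb : ‖f (u - x)‖ ≤ ‖u - x‖ := by
          calc ‖f (u - x)‖ ≤ ‖f‖ * ‖u - x‖ := f.le_opNorm _
            _ = ‖u - x‖ := by rw [hf1, one_mul]
        linarith
      linarith
    have h4 : ‖u - x‖ < r := by rwa [norm_sub_rev]
    have h5 : r ≤ η/2 := min_le_left _ _
    have := RCLike.re_le_norm (f u)
    linarith

end mazur2
end AUX


section fwd
variable {𝕂 X : Type*} [RCLike 𝕂] [NormedAddCommGroup X] [NormedSpace 𝕂 X]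

private lemma eq_one_of_re_eq_one {z : 𝕂} (h1 : RCLike.re z = 1) (h2 : ‖z‖ ≤ 1) : z = 1 := by
  have h3 : ‖z‖^2 ≤ 1 := by nlinarith [norm_nonneg z]
  rw [RCLike.norm_sq_eq_def] at h3
  have h4 : RCLike.im z = 0 := by nlinarith [sq_nonneg (RCLike.im z), sq_abs (RCLike.im z)]
  exact RCLike.ext (by simp [h1]) (by simp [h4])

private lemma numRadius_nonneg (f : X → X) : 0 ≤ numRadius 𝕂 f :=
  Real.sSup_nonneg (by rintro t ⟨y, y', -, -, -, rfl⟩; positivity)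

private lemma numRadius_bddBelow :
    BddBelow {r | ∃ L : ContinuousMultilinearMap 𝕂 (fun _ : Fin k => X) X,
      supNorm (polyEval L) = 1 ∧ r = numRadius 𝕂 (polyEval L)} :=
  ⟨0, by rintro r ⟨L', -, rfl⟩; exact numRadius_nonneg _⟩

private lemma numRadius_set_nonempty [Nontrivial X] (f : X → X) :
    {r | ∃ (y : X) (y' : X →L[𝕂] 𝕂), ‖y‖ = 1 ∧ ‖y'‖ = 1 ∧ y' y = 1 ∧
      r = ‖y' (f y)‖}.Nonempty := by
  obtain ⟨e₀, he₀⟩ := exists_ne (0 : X)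
  have he₀n : (0:ℝ) < ‖e₀‖ := norm_pos_iff.mpr he₀
  set e : X := ((‖e₀‖⁻¹ : ℝ) : 𝕂) • e₀ with hedef
  have he1 : ‖e‖ = 1 := by
    rw [hedef, norm_smul, RCLike.norm_ofReal, abs_of_pos (by positivity)]
    field_simp
  have he : e ≠ 0 := by
    intro h; rw [h, norm_zero] at he1; norm_num at he1
  obtain ⟨g, hg1, hge⟩ := exists_dual_vector 𝕂 e (norm_ne_zero_iff.mpr he)
  exact ⟨‖g (f e)‖, e, g, he1, hg1, by rw [hge, he1, RCLike.ofReal_one], rfl⟩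

private lemma numRadius_le_one {k : ℕ}
    (P : ContinuousMultilinearMap 𝕂 (fun _ : Fin k => X) X)
    (hsup : supNorm (polyEval P) = 1) : numRadius 𝕂 (polyEval P) ≤ 1 := by
  refine Real.sSup_le ?_ zero_le_one
  rintro t ⟨y, y', hy, hy', -, rfl⟩
  calc ‖y' (polyEval P y)‖ ≤ ‖y'‖ * ‖polyEval P y‖ := y'.le_opNorm _
    _ = ‖polyEval P y‖ := by rw [hy', one_mul]
    _ ≤ supNorm (polyEval P) :=
        norm_le_supNorm (polyEval_bdd P) (mem_closedBall_zero_iff.mpr hy.le)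
    _ = 1 := hsup

lemma forward_dir [Nontrivial X] {k : ℕ} (hk : 1 ≤ k)
    (hind : polyNumIndex 𝕂 X k = 1) :
    ∀ x ∈ polyAttainPts 𝕂 X k, ∀ x' : X →L[𝕂] 𝕂, WeakStarExposed 𝕂 x' → ‖x' x‖ = 1 := by
  rintro x ⟨hxball, L, hL0, hLatt⟩ x' ⟨hx'1, z, hzball, hx'z, huniq⟩
  -- ‖z‖ = 1
  have hz1 : ‖z‖ = 1 := by
    have h1 : (1:ℝ) = ‖x' z‖ := by rw [hx'z, norm_one]
    have h2 : ‖x' z‖ ≤ ‖x'‖ * ‖z‖ := x'.le_opNorm _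
    have h3 : ‖z‖ ≤ 1 := mem_closedBall_zero_iff.mp hzball
    have h4 : ‖x'‖ * ‖z‖ ≤ 1 * ‖z‖ := mul_le_mul_of_nonneg_right hx'1 (norm_nonneg _)
    rw [one_mul] at h4
    linarith
  -- M = supNorm p > 0
  set M := supNorm (polyEval L) with hMdef
  have hM : 0 < M := by
    obtain ⟨w, hw⟩ := Function.ne_iff.mp hL0
    have hw0 : w ≠ 0 := by
      intro h
      apply hw
      rw [h]
      exact L.map_coord_zero ⟨0, hk⟩ rfl
    have hwn : (0:ℝ) < ‖w‖ := norm_pos_iff.mpr hw0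
    set y : X := ((‖w‖⁻¹ : ℝ) : 𝕂) • w with hydef
    have hy1 : ‖y‖ = 1 := by
      rw [hydef, norm_smul, RCLike.norm_ofReal, abs_of_pos (by positivity)]
      field_simp
    have hpy : polyEval L y ≠ 0 := by
      rw [hydef, polyEval_smul_arg]
      exact smul_ne_zero (pow_ne_zero _ (RCLike.ofReal_ne_zero.mpr (by positivity))) hw
    calc (0:ℝ) < ‖polyEval L y‖ := norm_pos_iff.mpr hpy
      _ ≤ M := norm_le_supNorm (polyEval_bdd L) (mem_closedBall_zero_iff.mpr hy1.le)
  -- the normalized vector-valued polynomial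
  set c₀ : 𝕂 := ((M⁻¹ : ℝ) : 𝕂) with hc₀def
  set P := (c₀ • L).smulRight z with hPdef
  have hPx : ∀ u : X, polyEval P u = (c₀ * polyEval L u) • z := fun _ => rfl
  have hnorm : ∀ u : X, ‖polyEval P u‖ = M⁻¹ * ‖polyEval L u‖ := by
    intro u
    rw [hPx, norm_smul, hz1, mul_one, norm_mul, hc₀def, RCLike.norm_ofReal,
      abs_of_pos (by positivity)]
  have hsupP : supNorm (polyEval P) = 1 := by
    have := supNorm_smul_eq (f := polyEval L) (g := polyEval P)
      (c := M⁻¹) (by positivity) (polyEval_bdd L) hnorm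
    rw [this, ← hMdef, inv_mul_cancel₀ hM.ne']
  -- numerical radius is at least 1
  have hr1 : (1:ℝ) ≤ numRadius 𝕂 (polyEval P) := by
    rw [← hind]
    exact csInf_le numRadius_bddBelow ⟨P, hsupP, rfl⟩
  -- extract almost-norming pairs
  have hseq : ∀ n : ℕ, ∃ (y : X) (y' : X →L[𝕂] 𝕂), ‖y‖ = 1 ∧ ‖y'‖ = 1 ∧ y' y = 1 ∧
      1 - 1/((n:ℝ)+1) < ‖y' (polyEval P y)‖ := by
    intro n
    have hlt : 1 - 1/((n:ℝ)+1) < numRadius 𝕂 (polyEval P) := by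
      have : (0:ℝ) < 1/((n:ℝ)+1) := by positivity
      linarith
    obtain ⟨t, ⟨y, y', h1, h2, h3, rfl⟩, ht⟩ :=
      exists_lt_of_lt_csSup (numRadius_set_nonempty (polyEval P)) hlt
    exact ⟨y, y', h1, h2, h3, ht⟩
  choose ys fs hys hfs hpair hlt using hseq
  have hball : ∀ n, ys n ∈ Metric.closedBall (0:X) 1 :=
    fun n => mem_closedBall_zero_iff.mpr (hys n).le
  have hfsz_le : ∀ n, ‖fs n z‖ ≤ 1 := by
    intro n
    calc ‖fs n z‖ ≤ ‖fs n‖ * ‖z‖ := (fs n).le_opNorm _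
      _ = 1 := by rw [hfs n, hz1, mul_one]
  have hp_le : ∀ n, ‖polyEval L (ys n)‖ ≤ M :=
    fun n => norm_le_supNorm (polyEval_bdd L) (hball n)
  have hfP : ∀ n, ‖fs n (polyEval P (ys n))‖
      = (M⁻¹ * ‖polyEval L (ys n)‖) * ‖fs n z‖ := by
    intro n
    rw [hPx, map_smul, smul_eq_mul, norm_mul, norm_mul, hc₀def, RCLike.norm_ofReal,
      abs_of_pos (by positivity)]
  have hA_le : ∀ n, M⁻¹ * ‖polyEval L (ys n)‖ ≤ 1 := by
    intro n
    calc M⁻¹ * ‖polyEval L (ys n)‖ ≤ M⁻¹ * M :=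
        mul_le_mul_of_nonneg_left (hp_le n) (by positivity)
      _ = 1 := inv_mul_cancel₀ hM.ne'
  have hlt2 : ∀ n : ℕ, 1 - 1/((n:ℝ)+1) < M⁻¹ * ‖polyEval L (ys n)‖ := by
    intro n
    have h0 := hlt n
    rw [hfP n] at h0
    have hAnn : 0 ≤ M⁻¹ * ‖polyEval L (ys n)‖ := by positivity
    nlinarith [mul_le_of_le_one_right hAnn (hfsz_le n)]
  have hltz : ∀ n : ℕ, 1 - 1/((n:ℝ)+1) < ‖fs n z‖ := by
    intro n
    have h0 := hlt n
    rw [hfP n] at h0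
    nlinarith [mul_le_of_le_one_left (norm_nonneg (fs n z)) (hA_le n)]
  -- maximizing sequence for p
  have htendp : Tendsto (fun n => ‖polyEval L (ys n)‖) atTop (nhds M) := by
    have hlow : ∀ n : ℕ, M * (1 - 1/((n:ℝ)+1)) ≤ ‖polyEval L (ys n)‖ := by
      intro n
      have := hlt2 n
      have h2 : M * (1 - 1/((n:ℝ)+1)) ≤ M * (M⁻¹ * ‖polyEval L (ys n)‖) :=
        mul_le_mul_of_nonneg_left this.le hM.le
      rw [← mul_assoc, mul_inv_cancel₀ hM.ne', one_mul] at h2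
      exact h2
    refine tendsto_of_tendsto_of_tendsto_of_le_of_le
      (g := fun n : ℕ => M * (1 - 1/((n:ℝ)+1))) (h := fun _ => M) ?_ tendsto_const_nhds
      hlow hp_le
    have h1 : Tendsto (fun n : ℕ => 1 - 1/((n:ℝ)+1)) atTop (nhds 1) := by
      have := tendsto_one_div_add_atTop_nhds_zero_nat (𝕜 := ℝ)
      simpa using tendsto_const_nhds.sub this
    have := tendsto_const_nhds.mul h1 (f := fun _ : ℕ => M) (x := atTop)
    simpa using this
  obtain ⟨α, φ, hφ, hα, hconv⟩ := hLatt ys hball htendp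
  set w : X := α • x with hwdef
  have hconv' : Tendsto (fun n => ‖w - ys (φ n)‖) atTop (nhds 0) := by
    have := tendsto_iff_norm_sub_tendsto_zero.mp hconv
    simpa [norm_sub_rev] using this
  -- fs (φ n) w → 1
  have hfw : Tendsto (fun n => fs (φ n) w) atTop (nhds 1) := by
    rw [tendsto_iff_norm_sub_tendsto_zero]
    refine tendsto_of_tendsto_of_tendsto_of_le_of_le
      (g := fun _ : ℕ => (0:ℝ)) (h := fun n => ‖w - ys (φ n)‖)
      tendsto_const_nhds hconv' (fun n => norm_nonneg _) ?_
    intro n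
    show ‖fs (φ n) w - 1‖ ≤ ‖w - ys (φ n)‖
    have h1 : fs (φ n) w - 1 = fs (φ n) (w - ys (φ n)) := by
      rw [map_sub, hpair (φ n)]
    rw [h1]
    calc ‖fs (φ n) (w - ys (φ n))‖ ≤ ‖fs (φ n)‖ * ‖w - ys (φ n)‖ := (fs (φ n)).le_opNorm _
      _ = ‖w - ys (φ n)‖ := by rw [hfs (φ n), one_mul]
  have hfwn : Tendsto (fun n => ‖fs (φ n) w‖) atTop (nhds 1) := by
    have := hfw.norm
    simpa using this
  -- ‖fs (φ n) z‖ → 1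
  have hfz : Tendsto (fun n => ‖fs (φ n) z‖) atTop (nhds 1) := by
    refine tendsto_of_tendsto_of_tendsto_of_le_of_le
      (g := fun n : ℕ => 1 - 1/((n:ℝ)+1)) (h := fun _ => (1:ℝ)) ?_ tendsto_const_nhds
      ?_ (fun n => hfsz_le _)
    · have := tendsto_one_div_add_atTop_nhds_zero_nat (𝕜 := ℝ)
      simpa using tendsto_const_nhds.sub this
    · intro n
      refine le_of_lt (lt_of_le_of_lt ?_ (hltz (φ n)))
      have h1 : (n:ℝ) + 1 ≤ (φ n : ℝ) + 1 := by
        have := hφ.le_apply (x := n)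
        push_cast
        exact_mod_cast by linarith [(Nat.cast_le (α := ℝ)).mpr this]
      have h2 : 1/((φ n : ℝ)+1) ≤ 1/((n:ℝ)+1) :=
        one_div_le_one_div_of_le (by positivity) h1
      linarith
  have hw1 : ‖w‖ = 1 := by
    refine le_antisymm ?_ ?_
    · rw [hwdef, norm_smul, hα, one_mul]
      exact mem_closedBall_zero_iff.mp hxball
    · refine le_of_tendsto' hfwn (fun n => ?_)
      calc ‖fs (φ n) w‖ ≤ ‖fs (φ n)‖ * ‖w‖ := (fs (φ n)).le_opNorm _
        _ = ‖w‖ := by rw [hfs (φ n), one_mul]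
  -- maximize over the unit circle
  obtain ⟨c, hcs, hcmax⟩ := (isCompact_sphere (0:𝕂) 1).exists_isMaxOn
    ⟨1, by simp⟩ (f := fun c : 𝕂 => ‖z + c • w‖)
    (Continuous.continuousOn (by fun_prop))
  have hc1 : ‖c‖ = 1 := by simpa using hcs
  have h2le : ‖z + c • w‖ ≤ 2 := by
    calc ‖z + c • w‖ ≤ ‖z‖ + ‖c • w‖ := norm_add_le _ _
      _ = 2 := by rw [hz1, norm_smul, hc1, hw1]; norm_num
  have h2ge : 2 ≤ ‖z + c • w‖ := by
    have hsum : Tendsto (fun n => ‖fs (φ n) z‖ + ‖fs (φ n) w‖) atTop (nhds 2) := by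
      have := hfz.add hfwn
      norm_num at this
      exact this
    refine le_of_tendsto hsum ?_
    have hev : ∀ᶠ n in atTop, 0 < ‖fs (φ n) z‖ ∧ 0 < ‖fs (φ n) w‖ :=
      (hfz.eventually (eventually_gt_nhds zero_lt_one)).and
        (hfwn.eventually (eventually_gt_nhds zero_lt_one))
    filter_upwards [hev] with n ⟨hbz, hbw⟩
    set b₁ := fs (φ n) z with hb₁def
    set b₂ := fs (φ n) w with hb₂def
    have hb₁0 : b₁ ≠ 0 := norm_pos_iff.mp hbz
    have hb₂0 : b₂ ≠ 0 := norm_pos_iff.mp hbw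
    set cn : 𝕂 := (b₁ * (starRingEnd 𝕂) b₂) / (((‖b₁‖:ℝ):𝕂) * ((‖b₂‖:ℝ):𝕂)) with hcndef
    have hcn1 : ‖cn‖ = 1 := by
      rw [hcndef, norm_div, norm_mul, norm_mul, RCLike.norm_conj,
        RCLike.norm_ofReal, RCLike.norm_ofReal, abs_of_pos hbz, abs_of_pos hbw]
      field_simp
    have hkey : b₁ + cn * b₂ = ((((‖b₁‖:ℝ) + (‖b₂‖:ℝ) : ℝ)):𝕂) / ((‖b₁‖:ℝ):𝕂) * b₁ := by
      rw [hcndef]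
      have h1 : ((‖b₁‖:ℝ):𝕂) ≠ 0 := RCLike.ofReal_ne_zero.mpr hbz.ne'
      have h2 : ((‖b₂‖:ℝ):𝕂) ≠ 0 := RCLike.ofReal_ne_zero.mpr hbw.ne'
      field_simp
      rw [RCLike.conj_mul]
      push_cast
      ring
    have hnval : ‖b₁ + cn * b₂‖ = ‖b₁‖ + ‖b₂‖ := by
      rw [hkey, norm_mul, norm_div, RCLike.norm_ofReal, RCLike.norm_ofReal,
        abs_of_pos (by positivity), abs_of_pos hbz]
      field_simp
    have hfsb : ‖b₁ + cn * b₂‖ ≤ ‖z + cn • w‖ := by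
      have he : fs (φ n) (z + cn • w) = b₁ + cn * b₂ := by
        rw [map_add, map_smul, smul_eq_mul]
      calc ‖b₁ + cn * b₂‖ = ‖fs (φ n) (z + cn • w)‖ := by rw [he]
        _ ≤ ‖fs (φ n)‖ * ‖z + cn • w‖ := (fs (φ n)).le_opNorm _
        _ = ‖z + cn • w‖ := by rw [hfs (φ n), one_mul]
    have hmax : ‖z + cn • w‖ ≤ ‖z + c • w‖ := by
      have hcnmem : cn ∈ Metric.sphere (0:𝕂) 1 := by simpa using hcn1
      exact hcmax hcnmem
    calc ‖b₁‖ + ‖b₂‖ = ‖b₁ + cn * b₂‖ := hnval.symm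
      _ ≤ ‖z + cn • w‖ := hfsb
      _ ≤ ‖z + c • w‖ := hmax
  have heq2 : ‖z + c • w‖ = 2 := le_antisymm h2le h2ge
  have hu₂0 : z + c • w ≠ 0 := by
    intro h; rw [h, norm_zero] at heq2; norm_num at heq2
  obtain ⟨g₀, hg₀1, hg₀⟩ := exists_dual_vector 𝕂 (z + c • w) (norm_ne_zero_iff.mpr hu₂0)
  rw [heq2] at hg₀
  have hre2 : RCLike.re (g₀ z) + RCLike.re (g₀ (c • w)) = 2 := by
    have : g₀ (z + c • w) = g₀ z + g₀ (c • w) := map_add _ _ _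
    rw [this] at hg₀
    have := congrArg RCLike.re hg₀
    simpa [map_add] using this
  have hbz1 : ‖g₀ z‖ ≤ 1 := by
    calc ‖g₀ z‖ ≤ ‖g₀‖ * ‖z‖ := g₀.le_opNorm _
      _ = 1 := by rw [hg₀1, hz1, mul_one]
  have hbw1 : ‖g₀ (c • w)‖ ≤ 1 := by
    calc ‖g₀ (c • w)‖ ≤ ‖g₀‖ * ‖c • w‖ := g₀.le_opNorm _
      _ = 1 := by rw [hg₀1, norm_smul, hc1, hw1]; norm_num
  have hrez : RCLike.re (g₀ z) = 1 := by
    have h1 := RCLike.re_le_norm (g₀ z)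
    have h2 := RCLike.re_le_norm (g₀ (c • w))
    linarith
  have hrew : RCLike.re (g₀ (c • w)) = 1 := by linarith [hrez]
  have hg₀z : g₀ z = 1 := eq_one_of_re_eq_one hrez hbz1
  have hg₀w : g₀ (c • w) = 1 := eq_one_of_re_eq_one hrew hbw1
  have hg₀x' : g₀ = x' := huniq g₀ (le_of_eq hg₀1) hg₀z
  rw [hg₀x'] at hg₀w
  rw [hwdef] at hg₀w
  rw [map_smul, map_smul, smul_eq_mul, smul_eq_mul] at hg₀w
  have := congrArg (fun t : 𝕂 => ‖t‖) hg₀w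
  simp only [norm_mul, hc1, hα, norm_one, one_mul] at this
  exact this

end fwd


section rev
variable {𝕂 X : Type*} [RCLike 𝕂] [NormedAddCommGroup X] [NormedSpace 𝕂 X]

/-- There is a vector-valued `k`-homogeneous polynomial of sup-norm one. -/
private lemma exists_supNorm_one [Nontrivial X] {k : ℕ} (hk : 1 ≤ k) :
    ∃ L₁ : ContinuousMultilinearMap 𝕂 (fun _ : Fin k => X) X,
      supNorm (polyEval L₁) = 1 := by
  obtain ⟨e₀, he₀⟩ := exists_ne (0 : X)
  have he₀n : (0:ℝ) < ‖e₀‖ := norm_pos_iff.mpr he₀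
  set e : X := ((‖e₀‖⁻¹ : ℝ) : 𝕂) • e₀ with hedef
  have he1 : ‖e‖ = 1 := by
    rw [hedef, norm_smul, RCLike.norm_ofReal, abs_of_pos (by positivity)]
    field_simp
  have he : e ≠ 0 := by
    intro h; rw [h, norm_zero] at he1; norm_num at he1
  obtain ⟨f, hf1, hfe⟩ := exists_dual_vector 𝕂 e (norm_ne_zero_iff.mpr he)
  set L₀ : ContinuousMultilinearMap 𝕂 (fun _ : Fin k => X) 𝕂 :=
    (ContinuousMultilinearMap.mkPiAlgebra 𝕂 (Fin k) 𝕂).compContinuousLinearMap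
      (fun _ => f) with hL₀def
  have hL₀x : ∀ x : X, polyEval L₀ x = (f x)^k := by
    intro x
    simp [hL₀def, polyEval, ContinuousMultilinearMap.mkPiAlgebra_apply, Finset.prod_const]
  have hsup₀ : supNorm (polyEval L₀) = 1 := by
    refine le_antisymm ?_ ?_
    · refine supNorm_le zero_le_one ?_
      intro x hx
      rw [hL₀x, norm_pow]
      refine pow_le_one₀ (norm_nonneg _) ?_
      calc ‖f x‖ ≤ ‖f‖ * ‖x‖ := f.le_opNorm _
        _ ≤ 1 := by
            rw [hf1, one_mul]
            exact mem_closedBall_zero_iff.mp hx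
    · have : ‖polyEval L₀ e‖ = 1 := by
        rw [hL₀x, hfe, he1, RCLike.ofReal_one, one_pow, norm_one]
      rw [← this]
      exact norm_le_supNorm (polyEval_bdd L₀) (mem_closedBall_zero_iff.mpr he1.le)
  refine ⟨L₀.smulRight e, ?_⟩
  have hfg : ∀ x : X, ‖polyEval (L₀.smulRight e) x‖ = 1 * ‖polyEval L₀ x‖ := by
    intro x
    rw [polyEval_smulRight, norm_smul, he1, mul_one, one_mul]
  rw [supNorm_smul_eq zero_le_one (polyEval_bdd L₀) hfg, hsup₀, one_mul]

set_option maxHeartbeats 2000000 in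
lemma reverse_dir [CompleteSpace X] [Nontrivial X] [TopologicalSpace.SeparableSpace X]
    {k : ℕ} (hk : 1 ≤ k)
    (happrox : ∀ P : ContinuousMultilinearMap 𝕂 (fun _ : Fin k => X) X, ∀ ε > (0 : ℝ),
      ∃ (Q : ContinuousMultilinearMap 𝕂 (fun _ : Fin k => X) X) (x₀ : X),
        StronglyAttains 𝕂 (polyEval Q) x₀ ∧
          ∀ x ∈ Metric.closedBall (0 : X) 1, ‖polyEval P x - polyEval Q x‖ ≤ ε)
    (hyp : ∀ x ∈ polyAttainPts 𝕂 X k, ∀ x' : X →L[𝕂] 𝕂,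
        WeakStarExposed 𝕂 x' → ‖x' x‖ = 1) :
    polyNumIndex 𝕂 X k = 1 := by
  obtain ⟨L₁, hL₁⟩ := exists_supNorm_one (𝕂 := 𝕂) (X := X) hk
  have hmain : ∀ P : ContinuousMultilinearMap 𝕂 (fun _ : Fin k => X) X,
      supNorm (polyEval P) = 1 → (1:ℝ) ≤ numRadius 𝕂 (polyEval P) := by
    intro P hsupP
    have claim : ∀ ε : ℝ, 0 < ε → ε < 1/4 → 1 - 3*ε ≤ numRadius 𝕂 (polyEval P) := by
      intro ε hε hε4
      obtain ⟨Q, x₀, hQatt, hPQ⟩ := happrox P ε hε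
      set sQ := supNorm (polyEval Q) with hsQdef
      have hsQub : sQ ≤ 1 + ε := by
        refine supNorm_le (by linarith) ?_
        intro x hx
        have h1 := hPQ x hx
        have h2 : ‖polyEval P x‖ ≤ 1 := by
          rw [← hsupP]; exact norm_le_supNorm (polyEval_bdd P) hx
        have h3 : ‖polyEval Q x‖ - ‖polyEval P x‖ ≤ ‖polyEval P x - polyEval Q x‖ := by
          rw [norm_sub_rev]
          exact norm_sub_norm_le _ _
        linarith
      have hsQlb : 1 - ε ≤ sQ := by
        have h1 : supNorm (polyEval P) ≤ sQ + ε := by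
          refine supNorm_le ?_ ?_
          · linarith [supNorm_nonneg (polyEval Q)]
          · intro x hx
            have h1 := hPQ x hx
            have h2 : ‖polyEval Q x‖ ≤ sQ := norm_le_supNorm (polyEval_bdd Q) hx
            have := norm_sub_norm_le (polyEval P x) (polyEval Q x)
            linarith
        rw [hsupP] at h1
        linarith
      have hsQpos : 0 < sQ := by linarith
      -- strong attainment point
      obtain ⟨xs, hxsball, hxstend⟩ := exists_maximizing_seq (polyEval_bdd Q)
      obtain ⟨α, φ, hφ, hα, hconv⟩ := hQatt xs hxsball hxstend
      set x₁ : X := α • x₀ with hx₁def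
      have hα0 : α ≠ 0 := by
        intro h; rw [h, norm_zero] at hα; norm_num at hα
      have hx₁ball : x₁ ∈ Metric.closedBall (0:X) 1 := by
        rw [Metric.mem_closedBall, dist_zero_right]
        refine le_of_tendsto hconv.norm ?_
        filter_upwards with n
        exact mem_closedBall_zero_iff.mp (hxsball (φ n))
      have hQx₁ : ‖polyEval Q x₁‖ = sQ := by
        have h1 : Tendsto (fun n => ‖polyEval Q (xs (φ n))‖) atTop
            (nhds ‖polyEval Q x₁‖) :=
          ((polyEval_continuous Q).continuousAt.tendsto.comp hconv).norm
        have h2 : Tendsto (fun n => ‖polyEval Q (xs (φ n))‖) atTop (nhds sQ) :=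
          hxstend.comp (hφ.tendsto_atTop)
        exact tendsto_nhds_unique h1 h2
      have hQattx₁ : StronglyAttains 𝕂 (polyEval Q) x₁ := by
        intro zs hzs hztend
        obtain ⟨β, ψ, hψ, hβ, hzconv⟩ := hQatt zs hzs hztend
        refine ⟨β * α⁻¹, ψ, hψ, ?_, ?_⟩
        · rw [norm_mul, norm_inv, hα, hβ]; norm_num
        · have : (β * α⁻¹) • x₁ = β • x₀ := by
            rw [hx₁def, smul_smul, mul_assoc, inv_mul_cancel₀ hα0, mul_one]
          rw [this]
          exact hzconv
      have hx₁0 : x₁ ≠ 0 := by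
        intro h
        have : polyEval Q x₁ = 0 := by
          rw [h, polyEval]
          exact Q.map_coord_zero ⟨0, hk⟩ rfl
        rw [this, norm_zero] at hQx₁
        linarith
      -- the scalar polynomial strongly attaining at x₁
      have hu₁0 : polyEval Q x₁ ≠ 0 := by
        intro h; rw [h, norm_zero] at hQx₁; linarith
      obtain ⟨y₀, hy₀1, hy₀⟩ := exists_dual_vector 𝕂 (polyEval Q x₁) (norm_ne_zero_iff.mpr hu₁0)
      set q : ContinuousMultilinearMap 𝕂 (fun _ : Fin k => X) 𝕂 :=
        y₀.compContinuousMultilinearMap Q with hqdef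
      have hqx : ∀ x : X, polyEval q x = y₀ (polyEval Q x) := fun _ => rfl
      have hqb : ∀ x ∈ Metric.closedBall (0:X) 1, ‖polyEval q x‖ ≤ sQ := by
        intro x hx
        rw [hqx]
        calc ‖y₀ (polyEval Q x)‖ ≤ ‖y₀‖ * ‖polyEval Q x‖ := y₀.le_opNorm _
          _ = ‖polyEval Q x‖ := by rw [hy₀1, one_mul]
          _ ≤ sQ := norm_le_supNorm (polyEval_bdd Q) hx
      have hqx₁ : ‖polyEval q x₁‖ = sQ := by
        rw [hqx, hy₀, hQx₁, RCLike.norm_ofReal, abs_of_pos hsQpos]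
      have hsupq : supNorm (polyEval q) = sQ := by
        refine le_antisymm (supNorm_le hsQpos.le hqb) ?_
        rw [← hqx₁]
        exact norm_le_supNorm (polyEval_bdd q) hx₁ball
      have hq0 : polyEval q ≠ 0 := by
        intro h
        have : polyEval q x₁ = 0 := by rw [h]; rfl
        rw [this, norm_zero] at hqx₁
        linarith
      have hqatt : StronglyAttains 𝕂 (polyEval q) x₁ := by
        intro zs hzs hztend
        rw [hsupq] at hztend
        have hQtend : Tendsto (fun n => ‖polyEval Q (zs n)‖) atTop (nhds sQ) := by
          refine tendsto_of_tendsto_of_tendsto_of_le_of_le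
            (g := fun n => ‖polyEval q (zs n)‖) (h := fun _ => sQ) hztend
            tendsto_const_nhds ?_ ?_
          · intro n
            show ‖polyEval q (zs n)‖ ≤ ‖polyEval Q (zs n)‖
            rw [hqx]
            calc ‖y₀ (polyEval Q (zs n))‖ ≤ ‖y₀‖ * ‖polyEval Q (zs n)‖ := y₀.le_opNorm _
              _ = ‖polyEval Q (zs n)‖ := by rw [hy₀1, one_mul]
          · intro n
            show ‖polyEval Q (zs n)‖ ≤ sQ
            exact norm_le_supNorm (polyEval_bdd Q) (hzs n)
        exact hQattx₁ zs hzs hQtend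
      have hx₁mem : x₁ ∈ polyAttainPts 𝕂 X k := ⟨hx₁ball, q, hq0, hqatt⟩
      -- ‖x₁‖ = 1
      have hx₁n : ‖x₁‖ = 1 := by
        obtain ⟨w', hw'exp, -⟩ :=
          exists_weakStarExposed_norming (𝕂 := 𝕂) x₁ hx₁0 (η := 1) one_pos
        have h1 := hyp x₁ hx₁mem w' hw'exp
        have h2 : ‖w' x₁‖ ≤ ‖w'‖ * ‖x₁‖ := w'.le_opNorm _
        have h3 : ‖w'‖ ≤ 1 := hw'exp.1
        have h4 : ‖x₁‖ ≤ 1 := mem_closedBall_zero_iff.mp hx₁ball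
        nlinarith [norm_nonneg x₁, norm_nonneg w']
      -- the value of P at x₁ is big
      set u : X := polyEval P x₁ with hudef
      have hud : ‖u - polyEval Q x₁‖ ≤ ε := hPQ x₁ hx₁ball
      have hun : 1 - 2*ε ≤ ‖u‖ := by
        have := norm_sub_norm_le (polyEval Q x₁) u
        rw [norm_sub_rev] at this
        linarith [hQx₁ ▸ this]
      have hu0 : u ≠ 0 := by
        intro h
        rw [h, norm_zero] at hun
        linarith
      obtain ⟨x', hx'exp, hx'u⟩ :=
        exists_weakStarExposed_norming (𝕂 := 𝕂) u hu0 (η := ε) hε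
      have hx'x₁ : ‖x' x₁‖ = 1 := hyp x₁ hx₁mem x' hx'exp
      set lam : 𝕂 := x' x₁ with hlamdef
      have hlam0 : lam ≠ 0 := by
        intro h; rw [h, norm_zero] at hx'x₁; norm_num at hx'x₁
      have hx'n : ‖x'‖ = 1 := by
        refine le_antisymm hx'exp.1 ?_
        have h2 : ‖x' x₁‖ ≤ ‖x'‖ * ‖x₁‖ := x'.le_opNorm _
        rw [hx₁n, mul_one] at h2
        linarith [hx'x₁ ▸ h2]
      set y' : X →L[𝕂] 𝕂 := lam⁻¹ • x' with hy'def
      have hy'app : ∀ w : X, ‖y' w‖ = ‖x' w‖ := by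
        intro w
        rw [hy'def, ContinuousLinearMap.smul_apply, smul_eq_mul, norm_mul, norm_inv, hx'x₁]
        norm_num
      have hy'x₁ : y' x₁ = 1 := by
        rw [hy'def, ContinuousLinearMap.smul_apply, smul_eq_mul, ← hlamdef,
          inv_mul_cancel₀ hlam0]
      have hy'n : ‖y'‖ = 1 := by
        refine le_antisymm ?_ ?_
        · refine y'.opNorm_le_bound zero_le_one (fun w => ?_)
          rw [hy'app w, one_mul]
          calc ‖x' w‖ ≤ ‖x'‖ * ‖w‖ := x'.le_opNorm _
            _ = ‖w‖ := by rw [hx'n, one_mul]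
        · have h6 : ‖y' x₁‖ ≤ ‖y'‖ * ‖x₁‖ := y'.le_opNorm _
          rw [hy'x₁, hx₁n, mul_one, norm_one] at h6
          exact h6
      have hy'u : ‖y' u‖ = ‖x' u‖ := hy'app u
      have hTbdd : BddAbove {r | ∃ (y : X) (z' : X →L[𝕂] 𝕂), ‖y‖ = 1 ∧ ‖z'‖ = 1 ∧
          z' y = 1 ∧ r = ‖z' (polyEval P y)‖} := by
        refine ⟨1, ?_⟩
        rintro t ⟨y, z', hy, hz', -, rfl⟩
        calc ‖z' (polyEval P y)‖ ≤ ‖z'‖ * ‖polyEval P y‖ := z'.le_opNorm _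
          _ = ‖polyEval P y‖ := by rw [hz', one_mul]
          _ ≤ 1 := by
              rw [← hsupP]
              exact norm_le_supNorm (polyEval_bdd P) (mem_closedBall_zero_iff.mpr hy.le)
      have hmem : ‖y' (polyEval P x₁)‖ ∈ {r | ∃ (y : X) (z' : X →L[𝕂] 𝕂), ‖y‖ = 1 ∧
          ‖z'‖ = 1 ∧ z' y = 1 ∧ r = ‖z' (polyEval P y)‖} :=
        ⟨x₁, y', hx₁n, hy'n, hy'x₁, rfl⟩
      have : 1 - 3*ε ≤ ‖y' (polyEval P x₁)‖ := by
        rw [← hudef, hy'u]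
        linarith
      exact le_trans this (le_csSup hTbdd hmem)
    by_contra hcon
    push_neg at hcon
    set v := numRadius 𝕂 (polyEval P) with hvdef
    have hv0 : 0 ≤ v := numRadius_nonneg _
    set ε : ℝ := min ((1-v)/4) (1/8) with hεdef
    have hε : 0 < ε := lt_min (by linarith) (by norm_num)
    have hε4 : ε < 1/4 := lt_of_le_of_lt (min_le_right _ _) (by norm_num)
    have h1 := claim ε hε hε4
    have h2 : ε ≤ (1-v)/4 := min_le_left _ _
    linarith
  refine le_antisymm ?_ ?_
  · calc polyNumIndex 𝕂 X k ≤ numRadius 𝕂 (polyEval L₁) :=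
        csInf_le numRadius_bddBelow ⟨L₁, hL₁, rfl⟩
      _ ≤ 1 := numRadius_le_one L₁ hL₁
  · refine le_csInf ⟨numRadius 𝕂 (polyEval L₁), L₁, hL₁, rfl⟩ ?_
    rintro r ⟨P, hP, rfl⟩
    exact hmain P hP

end rev

/-- for a separable nontrivial Banach space in which strongly norm-attaining
polynomials are dense in `𝒫(ᵏX : X)`, `n^(k)(X) = 1` iff `|x*(x)| = 1` for every
`x ∈ ρ̃𝒫(ᵏX)` and every weak-* exposed point `x*` of `B_{X*}`. -/
theorem statement8 {𝕂 X : Type*} [RCLike 𝕂] [NormedAddCommGroup X] [NormedSpace 𝕂 X]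
    [CompleteSpace X] [Nontrivial X] [TopologicalSpace.SeparableSpace X]
    {k : ℕ} (hk : 1 ≤ k)
    (happrox : ∀ P : ContinuousMultilinearMap 𝕂 (fun _ : Fin k => X) X, ∀ ε > (0 : ℝ),
      ∃ (Q : ContinuousMultilinearMap 𝕂 (fun _ : Fin k => X) X) (x₀ : X),
        StronglyAttains 𝕂 (polyEval Q) x₀ ∧
          ∀ x ∈ Metric.closedBall (0 : X) 1, ‖polyEval P x - polyEval Q x‖ ≤ ε) :
    polyNumIndex 𝕂 X k = 1 ↔
      ∀ x ∈ polyAttainPts 𝕂 X k, ∀ x' : X →L[𝕂] 𝕂,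
        WeakStarExposed 𝕂 x' → ‖x' x‖ = 1 := by
  constructor
  · intro hind
    exact forward_dir hk hind
  · intro hyp
    exact reverse_dir hk happrox hyp
end

section
/- Let X be a real finite-dimensional Banach space with 2-polynomial numerical index n^(2)(X) = 1. Then X = ℝ (i.e., dim X = 1). -/
open Metric Filter Topology Set

section Aux

variable {X : Type*} [NormedAddCommGroup X] [NormedSpace ℝ X] [FiniteDimensional ℝ X]

/-- The numerical radius of a continuous map is attained on the compact set `Π(X)`. -/
lemma numRadius_attained (P : X → X) (hP : Continuous P)
    (x₀ : X) (f : X →L[ℝ] ℝ) (hx₀ : ‖x₀‖ = 1) (hf : ‖f‖ = 1) (hfx : f x₀ = 1) :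
    ∃ (x : X) (x' : X →L[ℝ] ℝ), ‖x‖ = 1 ∧ ‖x'‖ = 1 ∧ x' x = 1 ∧
      ‖x' (P x)‖ = numRadius ℝ P := by
  set K : Set (X × (X →L[ℝ] ℝ)) := {p | ‖p.1‖ = 1 ∧ ‖p.2‖ = 1 ∧ p.2 p.1 = 1} with hK
  have hKne : K.Nonempty := ⟨(x₀, f), hx₀, hf, hfx⟩
  have heval : Continuous fun p : X × (X →L[ℝ] ℝ) => p.2 p.1 :=
    isBoundedBilinearMap_apply.continuous.comp (continuous_snd.prodMk continuous_fst)
  have hKc : IsCompact K := by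
    have hsub : K ⊆ Metric.sphere (0:X) 1 ×ˢ Metric.sphere (0 : X →L[ℝ] ℝ) 1 := by
      rintro ⟨x, x'⟩ ⟨h1, h2, _⟩
      exact ⟨by simpa [mem_sphere_zero_iff_norm] using h1,
        by simpa [mem_sphere_zero_iff_norm] using h2⟩
    refine ((isCompact_sphere _ _).prod (isCompact_sphere _ _)).of_isClosed_subset ?_ hsub
    have h1 : IsClosed {p : X × (X →L[ℝ] ℝ) | ‖p.1‖ = 1} :=
      isClosed_eq continuous_fst.norm continuous_const
    have h2 : IsClosed {p : X × (X →L[ℝ] ℝ) | ‖p.2‖ = 1} :=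
      isClosed_eq continuous_snd.norm continuous_const
    have h3 : IsClosed {p : X × (X →L[ℝ] ℝ) | p.2 p.1 = 1} :=
      isClosed_eq heval continuous_const
    exact (h1.inter (h2.inter h3))
  have hg : Continuous fun p : X × (X →L[ℝ] ℝ) => ‖p.2 (P p.1)‖ := by
    have : Continuous fun p : X × (X →L[ℝ] ℝ) => p.2 (P p.1) :=
      isBoundedBilinearMap_apply.continuous.comp
        (continuous_snd.prodMk (hP.comp continuous_fst))
    exact this.norm
  obtain ⟨p, hpK, hmax⟩ := hKc.exists_isMaxOn hKne hg.continuousOn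
  refine ⟨p.1, p.2, hpK.1, hpK.2.1, hpK.2.2, ?_⟩
  have hset : {r | ∃ (x : X) (x' : X →L[ℝ] ℝ), ‖x‖ = 1 ∧ ‖x'‖ = 1 ∧ x' x = 1 ∧
      r = ‖x' (P x)‖} = (fun p : X × (X →L[ℝ] ℝ) => ‖p.2 (P p.1)‖) '' K := by
    ext r
    constructor
    · rintro ⟨x, x', h1, h2, h3, rfl⟩
      exact ⟨(x, x'), ⟨h1, h2, h3⟩, rfl⟩
    · rintro ⟨⟨x, x'⟩, ⟨h1, h2, h3⟩, rfl⟩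
      exact ⟨x, x', h1, h2, h3, rfl⟩
  rw [numRadius, hset]
  have hbdd : ∀ r ∈ (fun p : X × (X →L[ℝ] ℝ) => ‖p.2 (P p.1)‖) '' K,
      r ≤ ‖p.2 (P p.1)‖ := by
    rintro r ⟨q, hq, rfl⟩
    exact hmax hq
  exact le_antisymm (le_csSup ⟨_, hbdd⟩ (Set.mem_image_of_mem _ hpK))
    (csSup_le (hKne.image _) hbdd)

/-- At a point of differentiability of the norm, every support functional equals the
derivative. -/
lemma support_eq_fderiv {x : X} (hd : DifferentiableAt ℝ (fun z : X => ‖z‖) x)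
    {x' : X →L[ℝ] ℝ} (hx'1 : ‖x'‖ = 1) (hx'x : x' x = ‖x‖) (v : X) :
    x' v = fderiv ℝ (fun z : X => ‖z‖) x v := by
  have hA : HasDerivAt (fun t : ℝ => x + t • v) v 0 := by
    simpa using ((hasDerivAt_id (0:ℝ)).smul_const v).const_add x
  have h0 : x + (0:ℝ) • v = x := by simp
  have hN : HasDerivAt (fun t : ℝ => ‖x + t • v‖) (fderiv ℝ (fun z : X => ‖z‖) x v) 0 := by
    have hfd : HasFDerivAt (fun z : X => ‖z‖) (fderiv ℝ (fun z : X => ‖z‖) x)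
        (x + (0:ℝ) • v) := by rw [h0]; exact hd.hasFDerivAt
    exact hfd.comp_hasDerivAt 0 hA
  have hL : HasDerivAt (fun t : ℝ => x' (x + t • v)) (x' v) 0 :=
    x'.hasFDerivAt.comp_hasDerivAt 0 hA
  have hgd : HasDerivAt (fun t : ℝ => ‖x + t • v‖ - x' (x + t • v))
      (fderiv ℝ (fun z : X => ‖z‖) x v - x' v) 0 := hN.sub hL
  have hmin : IsLocalMin (fun t : ℝ => ‖x + t • v‖ - x' (x + t • v)) 0 := by
    apply Filter.Eventually.of_forall
    intro t
    have h1 : x' (x + t • v) ≤ ‖x + t • v‖ := by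
      calc x' (x + t • v) ≤ |x' (x + t • v)| := le_abs_self _
        _ ≤ ‖x'‖ * ‖x + t • v‖ := x'.le_opNorm _
        _ = ‖x + t • v‖ := by rw [hx'1, one_mul]
    simp only [h0, hx'x]
    linarith
  have := hmin.hasDerivAt_eq_zero hgd
  linarith [sub_eq_zero.mp this]

/-- Existence of a smooth point of the unit sphere together with its unique support
functional. -/
lemma exists_smooth_point [Nontrivial X] :
    ∃ (x₀ : X) (f : X →L[ℝ] ℝ), ‖x₀‖ = 1 ∧ ‖f‖ = 1 ∧ f x₀ = 1 ∧
      ∀ x' : X →L[ℝ] ℝ, ‖x'‖ = 1 → x' x₀ = 1 → x' = f := by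
  obtain ⟨x, hxd, hx0⟩ : ∃ x : X, DifferentiableAt ℝ (fun z : X => ‖z‖) x ∧ x ≠ 0 := by
    obtain ⟨v, hv⟩ := exists_ne (0 : X)
    obtain ⟨x, hx1, hx2⟩ := dense_differentiableAt_norm (E := X) |>.exists_mem_open
      (isOpen_compl_singleton (x := (0 : X))) ⟨v, hv⟩
    exact ⟨x, hx1, hx2⟩
  have hxn : ‖x‖ ≠ 0 := norm_ne_zero_iff.mpr hx0
  set x₀ : X := ‖x‖⁻¹ • x with hx₀def
  have hx₀norm : ‖x₀‖ = 1 := by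
    rw [hx₀def, norm_smul, norm_inv, norm_norm, inv_mul_cancel₀ hxn]
  have hx₀0 : x₀ ≠ 0 := by
    intro hc
    rw [hc] at hx₀norm
    simp at hx₀norm
  have hxeq : x = ‖x‖ • x₀ := by
    rw [hx₀def, smul_smul, mul_inv_cancel₀ hxn, one_smul]
  obtain ⟨f, hf1, hf2⟩ := exists_dual_vector ℝ x₀ (norm_ne_zero_iff.mpr hx₀0)
  have hf2' : f x₀ = 1 := by rw [hf2, hx₀norm]; norm_num
  have hsupp : ∀ x' : X →L[ℝ] ℝ, ‖x'‖ = 1 → x' x₀ = 1 → x' x = ‖x‖ := by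
    intro x' h1 h2
    rw [hxeq, map_smul, h2, smul_eq_mul, mul_one, norm_smul, norm_norm, hx₀norm, mul_one]
  refine ⟨x₀, f, hx₀norm, hf1, hf2', ?_⟩
  intro x' h1 h2
  ext v
  rw [support_eq_fderiv hxd h1 (hsupp x' h1 h2) v,
    ← support_eq_fderiv hxd hf1 (hsupp f hf1 hf2') v]

/-- evaluation of the building block. -/
lemma blk_eval (φ : X →L[ℝ] ℝ) (y x : X) :
    ((ContinuousMultilinearMap.mkPiAlgebra ℝ (Fin 2) ℝ).compContinuousLinearMap
      ![φ, φ]).smulRight y (fun _ => x) = (φ x * φ x) • y := by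
  show ((ContinuousMultilinearMap.mkPiAlgebra ℝ (Fin 2) ℝ).compContinuousLinearMap
    ![φ, φ]) (fun _ => x) • y = _
  simp [ContinuousMultilinearMap.compContinuousLinearMap_apply, Fin.prod_univ_two]

set_option maxHeartbeats 1000000 in
/-- Key lemma: if `n⁽²⁾(X) = 1` and `x₀` is a smooth point of the unit sphere with support
functional `f`, then `|f y| = 1` for every unit vector `y`. -/
lemma key_abs_eq_one (h : polyNumIndex ℝ X 2 = 1)
    (x₀ : X) (hx₀ : ‖x₀‖ = 1) (f : X →L[ℝ] ℝ) (hf : ‖f‖ = 1) (hfx₀ : f x₀ = 1)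
    (huniq : ∀ x' : X →L[ℝ] ℝ, ‖x'‖ = 1 → x' x₀ = 1 → x' = f)
    (y : X) (hy : ‖y‖ = 1) : |f y| = 1 := by
  classical
  set n := Module.finrank ℝ X with hn
  let b : Module.Basis (Fin n) ℝ X := Module.finBasis ℝ X
  set g : Fin n → X →L[ℝ] ℝ := fun i =>
    LinearMap.toContinuousLinearMap (b.coord i) - f.smulRight (b.coord i x₀) with hgdef
  have hgi : ∀ i x, g i x = b.coord i (x - f x • x₀) := by
    intro i x
    simp [hgdef, ContinuousLinearMap.sub_apply, ContinuousLinearMap.smulRight_apply,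
      LinearMap.coe_toContinuousLinearMap', map_sub, map_smul, smul_eq_mul]
  clear_value g
  set E : X → ℝ := fun x => ∑ i, (g i x) ^ 2 with hEdef
  have hEval : ∀ x, E x = ∑ i, (g i x) ^ 2 := fun _ => rfl
  clear_value E
  have hEc : Continuous E := by
    have : E = fun x => ∑ i, (g i x) ^ 2 := funext hEval
    rw [this]
    exact continuous_finset_sum _ fun i _ => ((g i).continuous.pow 2)
  have hE0 : ∀ x, 0 ≤ E x := fun x => by
    rw [hEval x]; exact Finset.sum_nonneg fun i _ => sq_nonneg _
  have hEz : ∀ x, E x = 0 → x = f x • x₀ := by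
    intro x hx
    rw [hEval x] at hx
    have hterm := (Finset.sum_eq_zero_iff_of_nonneg
      (fun i (_ : i ∈ Finset.univ) => sq_nonneg (g i x))).mp hx
    have hcoord : ∀ i, b.coord i (x - f x • x₀) = 0 := by
      intro i
      rw [← hgi i x]
      exact sq_eq_zero_iff.mp (hterm i (Finset.mem_univ i))
    exact sub_eq_zero.mp (b.forall_coord_eq_zero_iff.mp hcoord)
  have hEx₀ : E x₀ = 0 := by
    rw [hEval x₀]
    apply Finset.sum_eq_zero
    intro i _
    rw [hgi i x₀, hfx₀, one_smul, sub_self, map_zero]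
    norm_num
  clear hgdef hgi
  clear b
  obtain ⟨z, hz, hmax⟩ := (isCompact_closedBall (0:X) 1).exists_isMaxOn
    ⟨0, mem_closedBall_self zero_le_one⟩ hEc.continuousOn
  set M : ℝ := E z with hMdef
  have hM0 : 0 ≤ M := hE0 z
  have hEball : ∀ x : X, ‖x‖ ≤ 1 → E x ≤ M := by
    intro x hx
    exact hmax (by simpa [mem_closedBall, dist_zero_right] using hx)
  clear_value M
  clear hmax hz hEdef hMdef
  clear z
  set ε : ℝ := (M + 1)⁻¹ with hεdef
  have hε : 0 < ε := by rw [hεdef]; positivity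
  have hεM : ε * M < 1 := by
    rw [hεdef, mul_comm, ← div_eq_mul_inv]
    exact (div_lt_one (by linarith)).mpr (by linarith)
  clear_value ε
  clear hεdef
  set Q : X → ℝ := fun x => (f x) ^ 2 - ε * E x with hQdef
  have hQval : ∀ x, Q x = (f x) ^ 2 - ε * E x := fun _ => rfl
  clear_value Q
  clear hQdef
  have hQc : Continuous Q := by
    have : Q = fun x => (f x) ^ 2 - ε * E x := funext hQval
    rw [this]
    exact ((f.continuous.pow 2).sub (continuous_const.mul hEc))
  have hQx₀ : Q x₀ = 1 := by rw [hQval, hfx₀, hEx₀]; norm_num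
  have hfsq : ∀ x : X, ‖x‖ ≤ 1 → (f x) ^ 2 ≤ 1 := by
    intro x hx
    have h1 : |f x| ≤ 1 := by
      calc |f x| = ‖f x‖ := (Real.norm_eq_abs _).symm
        _ ≤ ‖f‖ * ‖x‖ := f.le_opNorm x
        _ ≤ 1 := by rw [hf, one_mul]; exact hx
    nlinarith [abs_nonneg (f x), sq_abs (f x)]
  have hQlb : ∀ x : X, ‖x‖ ≤ 1 → -(ε * M) ≤ Q x := by
    intro x hx
    have h1 := hEball x hx
    have h2 : ε * E x ≤ ε * M := mul_le_mul_of_nonneg_left h1 hε.le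
    rw [hQval x]
    nlinarith [sq_nonneg (f x)]
  have hQle : ∀ x : X, ‖x‖ ≤ 1 → |Q x| ≤ 1 := by
    intro x hx
    rw [abs_le]
    constructor
    · linarith [hQlb x hx, hεM]
    · rw [hQval x]
      have := hE0 x
      nlinarith [hfsq x hx, hε]
  -- the polynomial
  set L : ContinuousMultilinearMap ℝ (fun _ : Fin 2 => X) X :=
    ((ContinuousMultilinearMap.mkPiAlgebra ℝ (Fin 2) ℝ).compContinuousLinearMap
      ![f, f]).smulRight y -
    ε • ∑ i, ((ContinuousMultilinearMap.mkPiAlgebra ℝ (Fin 2) ℝ).compContinuousLinearMap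
      ![g i, g i]).smulRight y with hLdef
  have hL : ∀ x, polyEval L x = Q x • y := by
    intro x
    have h1 : polyEval L x = (f x * f x) • y -
        ε • ∑ i, (g i x * g i x) • y := by
      rw [polyEval, hLdef]
      rw [ContinuousMultilinearMap.sub_apply, ContinuousMultilinearMap.smul_apply,
        ContinuousMultilinearMap.sum_apply, blk_eval]
      congr 1
      · congr 1
        exact Finset.sum_congr rfl fun i _ => blk_eval (g i) y x
    rw [h1, ← Finset.sum_smul, smul_smul, ← sub_smul]
    congr 1
    rw [hQval x, hEval x]
    simp only [sq]
  clear_value L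
  clear hLdef
  have hPc : Continuous (polyEval L) := by
    have : polyEval L = fun x => Q x • y := funext hL
    rw [this]
    exact hQc.smul continuous_const
  have hx₀mem : x₀ ∈ closedBall (0:X) 1 := by
    simp [mem_closedBall, dist_zero_right, hx₀]
  have himg : ∀ x, ‖polyEval L x‖ = |Q x| := by
    intro x
    rw [hL, norm_smul, hy, mul_one, Real.norm_eq_abs]
  have hsup : supNorm (polyEval L) = 1 := by
    rw [supNorm]
    have hub : ∀ r ∈ (fun x => ‖polyEval L x‖) '' closedBall (0:X) 1, r ≤ 1 := by
      rintro r ⟨x, hx, rfl⟩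
      simp only [himg x]
      exact hQle x (by simpa [mem_closedBall, dist_zero_right] using hx)
    refine le_antisymm (csSup_le ⟨‖polyEval L 0‖,
      ⟨0, mem_closedBall_self zero_le_one, rfl⟩⟩ hub) (le_csSup ⟨1, hub⟩ ?_)
    refine ⟨x₀, hx₀mem, ?_⟩
    simp only [himg x₀, hQx₀]
    norm_num
  have hbdd : BddBelow {r | ∃ L' : ContinuousMultilinearMap ℝ (fun _ : Fin 2 => X) X,
      supNorm (polyEval L') = 1 ∧ r = numRadius ℝ (polyEval L')} := by
    refine ⟨0, ?_⟩
    rintro r ⟨L', -, rfl⟩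
    refine Real.sSup_nonneg ?_
    rintro t ⟨x, x', -, -, -, rfl⟩
    exact norm_nonneg _
  have h1le : (1:ℝ) ≤ numRadius ℝ (polyEval L) := by
    rw [← h, polyNumIndex]
    exact csInf_le hbdd ⟨L, hsup, rfl⟩
  obtain ⟨x, x', hx1, hx'1, hxx', heq⟩ := numRadius_attained (polyEval L) hPc x₀ f hx₀ hf hfx₀
  have hxball : ‖x‖ ≤ 1 := le_of_eq hx1
  have hval : |Q x| * |x' y| = numRadius ℝ (polyEval L) := by
    rw [← heq, hL, map_smul, smul_eq_mul, Real.norm_eq_abs, abs_mul]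
  have hby : |x' y| ≤ 1 := by
    calc |x' y| = ‖x' y‖ := (Real.norm_eq_abs _).symm
      _ ≤ ‖x'‖ * ‖y‖ := x'.le_opNorm y
      _ = 1 := by rw [hx'1, hy, one_mul]
  have hprod : 1 ≤ |Q x| * |x' y| := by rw [hval]; exact h1le
  have haQ : |Q x| ≤ 1 := hQle x hxball
  have hb1 : |x' y| = 1 := by nlinarith [abs_nonneg (Q x), abs_nonneg (x' y)]
  have ha1 : |Q x| = 1 := by nlinarith [abs_nonneg (Q x), abs_nonneg (x' y)]
  have hQx1 : Q x = 1 := by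
    rcases (abs_eq (by norm_num : (0:ℝ) ≤ 1)).mp ha1 with h' | h'
    · exact h'
    · exfalso
      have := hQlb x hxball
      rw [h'] at this
      linarith [hεM]
  have hEx : E x = 0 := by
    have h2 : ε * E x ≤ 0 := by
      have := hfsq x hxball
      rw [hQval x] at hQx1
      linarith
    have := hE0 x
    nlinarith
  have hxeq : x = f x • x₀ := hEz x hEx
  have hfx2 : (f x) ^ 2 = 1 := by
    rw [hQval x, hEx] at hQx1
    linarith
  have hcases : f x = 1 ∨ f x = -1 := by
    rcases mul_eq_zero.mp (show (f x - 1) * (f x + 1) = 0 by nlinarith) with h' | h'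
    · left; linarith
    · right; linarith
  rcases hcases with hc | hc
  · have hx'x₀ : x' x₀ = 1 := by
      rw [hxeq, hc, one_smul] at hxx'
      exact hxx'
    rw [← huniq x' hx'1 hx'x₀]
    exact hb1
  · have hx'x₀ : (-x') x₀ = 1 := by
      rw [hxeq, hc] at hxx'
      simp only [map_smul, smul_eq_mul, neg_one_mul] at hxx'
      simp [ContinuousLinearMap.neg_apply]
      linarith
    have hnormneg : ‖-x'‖ = 1 := by rw [norm_neg]; exact hx'1
    have := huniq (-x') hnormneg hx'x₀
    rw [← this]
    simp only [ContinuousLinearMap.neg_apply, abs_neg]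
    exact hb1

theorem statement10' (h : polyNumIndex ℝ X 2 = 1) :
    Module.finrank ℝ X = 1 := by
  by_cases hn : Module.finrank ℝ X = 0
  · exfalso
    haveI : Subsingleton X := Module.finrank_zero_iff.mp hn
    have hempty : {r | ∃ L : ContinuousMultilinearMap ℝ (fun _ : Fin 2 => X) X,
        supNorm (polyEval L) = 1 ∧ r = numRadius ℝ (polyEval L)} = ∅ := by
      ext r
      simp only [Set.mem_setOf_eq, Set.mem_empty_iff_false, iff_false]
      rintro ⟨L, hL, -⟩
      have hzero : ∀ x : X, polyEval L x = 0 := fun x => Subsingleton.elim _ _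
      have himg : (fun x => ‖polyEval L x‖) '' Metric.closedBall (0:X) 1 = {0} := by
        apply Set.eq_singleton_iff_unique_mem.mpr
        constructor
        · exact ⟨0, mem_closedBall_self zero_le_one, by simp only [hzero 0, norm_zero]⟩
        · rintro r ⟨x, -, rfl⟩
          simp only [hzero x, norm_zero]
      rw [supNorm, himg, csSup_singleton] at hL
      norm_num at hL
    rw [polyNumIndex, hempty, Real.sInf_empty] at h
    norm_num at h
  · haveI : Nontrivial X := by
      apply Module.nontrivial_of_finrank_pos (R := ℝ)
      exact Nat.pos_of_ne_zero hn
    obtain ⟨x₀, f, hx₀, hf, hfx₀, huniq⟩ := exists_smooth_point (X := X)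
    have hkey : ∀ y : X, ‖y‖ = 1 → |f y| = 1 :=
      fun y hy => key_abs_eq_one h x₀ hx₀ f hf hfx₀ huniq y hy
    have hinj : Function.Injective (f : X →ₗ[ℝ] ℝ) := by
      intro a c hac
      simp only [ContinuousLinearMap.coe_coe] at hac
      by_contra hne
      have hne' : a - c ≠ 0 := sub_ne_zero.mpr hne
      have hnorm : ‖a - c‖ ≠ 0 := norm_ne_zero_iff.mpr hne'
      have h1 : ‖‖a - c‖⁻¹ • (a - c)‖ = 1 := by
        rw [norm_smul, norm_inv, norm_norm, inv_mul_cancel₀ hnorm]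
      have := hkey _ h1
      rw [map_smul, map_sub, hac, sub_self, smul_zero] at this
      norm_num at this
    have hle : Module.finrank ℝ X ≤ Module.finrank ℝ ℝ :=
      LinearMap.finrank_le_finrank_of_injective hinj
    rw [Module.finrank_self] at hle
    omega

end Aux

/-- a finite-dimensional real Banach space with `n^(2)(X) = 1` is
one-dimensional, i.e. `X = ℝ`. -/
theorem statement10 {X : Type*} [NormedAddCommGroup X] [NormedSpace ℝ X]
    [FiniteDimensional ℝ X] (h : polyNumIndex ℝ X 2 = 1) :
    Module.finrank ℝ X = 1 := by
  exact statement10' h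
end

section
/- Let X and Y be complex Banach spaces with X nontrivial. If f ∈ A_b(B_X : Y) strongly attains its norm at x₀, then x₀ ∈ S_X (i.e., ‖x₀‖ = 1). -/
open Metric Filter Topology Set

/-- STATEMENT 12 proof. -/
theorem statement12 {X Y : Type*} [NormedAddCommGroup X] [NormedSpace ℂ X] [CompleteSpace X]
    [NormedAddCommGroup Y] [NormedSpace ℂ Y] [CompleteSpace Y] [Nontrivial X]
    (f : X → Y) (hf : MemAb f) (hfne : ∃ x ∈ Metric.closedBall (0 : X) 1, f x ≠ 0)
    (x₀ : X) (hatt : StronglyAttains ℂ f x₀) : ‖x₀‖ = 1 := by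
  classical
  obtain ⟨hcont, ⟨C, hC⟩, hdiff⟩ := hf
  set S := (fun x => ‖f x‖) '' Metric.closedBall (0 : X) 1 with hS
  have hSne : S.Nonempty := ⟨‖f 0‖, ⟨0, by simp, rfl⟩⟩
  have hSbdd : BddAbove S := ⟨C, by rintro r ⟨x, hx, rfl⟩; exact hC x hx⟩
  have hle : ∀ x ∈ Metric.closedBall (0 : X) 1, ‖f x‖ ≤ supNorm f := fun x hx =>
    le_csSup hSbdd ⟨x, hx, rfl⟩
  -- maximizing sequence
  obtain ⟨u, -, hu, humem⟩ := exists_seq_tendsto_sSup hSne hSbdd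
  choose xs hxs hxs2 using humem
  have hxs2' : Tendsto (fun n => ‖f (xs n)‖) atTop (nhds (supNorm f)) := by
    have hu' : Tendsto u atTop (nhds (supNorm f)) := hu; simpa only [hxs2] using hu'
  obtain ⟨α, φ, hφ, hα, hconv⟩ := hatt xs hxs hxs2'
  have hmem : α • x₀ ∈ Metric.closedBall (0 : X) 1 :=
    Metric.isClosed_closedBall.mem_of_tendsto hconv (Eventually.of_forall fun n => hxs (φ n))
  have hx0le : ‖x₀‖ ≤ 1 := by
    have := mem_closedBall_zero_iff.mp hmem
    rwa [norm_smul, hα, one_mul] at this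
  -- f attains its sup at α • x₀
  have hconv' : Tendsto (fun n => xs (φ n)) atTop (nhdsWithin (α • x₀) (Metric.closedBall (0:X) 1)) :=
    tendsto_nhdsWithin_of_tendsto_nhds_of_eventually_within _ hconv
      (Eventually.of_forall fun n => hxs (φ n))
  have hfc : Tendsto (fun n => ‖f (xs (φ n))‖) atTop (nhds ‖f (α • x₀)‖) :=
    ((hcont (α • x₀) hmem).tendsto.comp hconv').norm
  have hfc2 : Tendsto (fun n => ‖f (xs (φ n))‖) atTop (nhds (supNorm f)) :=
    hxs2'.comp hφ.tendsto_atTop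
  have hattain : ‖f (α • x₀)‖ = supNorm f := tendsto_nhds_unique hfc hfc2
  -- Suppose ‖x₀‖ < 1
  by_contra hne
  have hlt : ‖x₀‖ < 1 := lt_of_le_of_ne hx0le hne
  have hmemo : α • x₀ ∈ Metric.ball (0 : X) 1 := by
    rw [mem_ball_zero_iff, norm_smul, hα, one_mul]; exact hlt
  have hmax : IsMaxOn (norm ∘ f) (Metric.ball (0 : X) 1) (α • x₀) := fun y hy => by
    simp only [Function.comp, hattain]
    exact hle y (ball_subset_closedBall hy)
  have hconst := Complex.norm_eqOn_of_isPreconnected_of_isMaxOn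
    (convex_ball (0:X) 1).isPreconnected isOpen_ball hdiff hmemo hmax
  -- pick z in open ball with ‖z‖ ≠ ‖x₀‖
  obtain ⟨v, hv⟩ := exists_ne (0 : X)
  set z : X := if x₀ = 0 then ((1:ℝ)/(2*‖v‖)) • v else ((1:ℝ)/2) • x₀ with hz
  have hzball : z ∈ Metric.ball (0 : X) 1 := by
    rw [mem_ball_zero_iff, hz]
    split_ifs with h
    · have hv' : (0:ℝ) < ‖v‖ := norm_pos_iff.mpr hv
      rw [norm_smul, Real.norm_eq_abs, abs_of_pos (by positivity), div_mul_eq_mul_div, one_mul,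
        div_lt_one (by positivity)]
      linarith
    · have := norm_nonneg x₀
      rw [norm_smul, Real.norm_eq_abs, abs_of_pos (by norm_num : (0:ℝ) < 1/2)]
      linarith
  have hznorm : ‖z‖ ≠ ‖x₀‖ := by
    rw [hz]; split_ifs with h
    · have hv' : (0:ℝ) < ‖v‖ := norm_pos_iff.mpr hv
      rw [h, norm_zero, norm_smul, Real.norm_eq_abs, abs_of_pos (by positivity)]
      positivity
    · rw [norm_smul, Real.norm_eq_abs, abs_of_pos (by norm_num : (0:ℝ) < 1/2)]
      intro hc
      have hx0 : ‖x₀‖ ≠ 0 := fun h0 => h (norm_eq_zero.mp h0)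
      exact hx0 (by linarith)
  -- constant maximizing sequence at z
  have hzval : ‖f z‖ = supNorm f := by
    have h1 : ‖f z‖ = ‖f (α • x₀)‖ := hconst hzball
    rw [h1, hattain]
  have := hatt (fun _ => z) (fun _ => ball_subset_closedBall hzball)
    (by simpa only [hzval] using (tendsto_const_nhds : Tendsto (fun _ : ℕ => ‖f z‖) atTop (nhds ‖f z‖)))
  obtain ⟨β, ψ, -, hβ, hconvz⟩ := this
  have : z = β • x₀ := tendsto_nhds_unique tendsto_const_nhds hconvz
  apply hznorm
  rw [this, norm_smul, hβ, one_mul]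
end

section
/- Let X be a complex Banach space. Every strong peak point of A_u(B_X) (or of A_b(B_X)) is a complex extreme point of B_X. Hence ρA(B_X) ⊆ ext_ℂ(B_X). -/
open Metric Filter Topology Set

lemma unimod_bound {X : Type*} [NormedAddCommGroup X] [NormedSpace ℂ X]
    {x₀ y : X} (hx₀ : ‖x₀‖ ≤ 1)
    (hy : ∀ θ : ℝ, ‖x₀ + Complex.exp (θ * Complex.I) • y‖ ≤ 1)
    {u : ℂ} (hu : ‖u‖ = 1) : ‖x₀ + u • y‖ ≤ 1 := by
  have habs : ‖u‖ = 1 := hu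
  have huexp : Complex.exp (↑u.arg * Complex.I) = u := by
    have h := Complex.norm_mul_exp_arg_mul_I u
    rwa [habs, Complex.ofReal_one, one_mul] at h
  simpa [huexp] using hy u.arg

lemma ball_bound {X : Type*} [NormedAddCommGroup X] [NormedSpace ℂ X]
    {x₀ y : X} (hx₀ : ‖x₀‖ ≤ 1)
    (hy : ∀ θ : ℝ, ‖x₀ + Complex.exp (θ * Complex.I) • y‖ ≤ 1)
    {l : ℂ} (hl : ‖l‖ ≤ 1) : ‖x₀ + l • y‖ ≤ 1 := by
  rcases eq_or_ne l 0 with rfl | hne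
  · simpa using hx₀
  · set u : ℂ := (‖l‖ : ℂ)⁻¹ * l with hu
    have hnl : (0:ℝ) < ‖l‖ := norm_pos_iff.mpr hne
    have hnl' : ((‖l‖ : ℝ) : ℂ) ≠ 0 := by exact_mod_cast hnl.ne'
    have habs : ‖l‖ ≠ 0 := norm_ne_zero_iff.mpr hne
    have hunorm : ‖u‖ = 1 := by
      rw [hu, norm_mul, norm_inv, Complex.norm_real, Real.norm_eq_abs, abs_of_pos hnl]
      field_simp
    have hun : ‖x₀ + u • y‖ ≤ 1 := unimod_bound hx₀ hy hunorm
    have hdecomp : x₀ + l • y = ((1 : ℂ) - (‖l‖ : ℂ)) • x₀ + (‖l‖ : ℂ) • (x₀ + u • y) := by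
      have h2 : ((‖l‖ : ℂ)) * u = l := by rw [hu, ← mul_assoc, mul_inv_cancel₀ hnl', one_mul]
      rw [smul_add, smul_smul, h2, sub_smul, one_smul]; abel
    have h1 : ‖(1:ℂ) - (‖l‖:ℂ)‖ = 1 - ‖l‖ := by
      rw [show (1:ℂ) - (‖l‖:ℂ) = ((1 - ‖l‖ : ℝ) : ℂ) by push_cast; ring,
        Complex.norm_real, Real.norm_eq_abs, abs_of_nonneg (by linarith)]
    have h2 : ‖((‖l‖:ℝ):ℂ)‖ = ‖l‖ := by
      rw [Complex.norm_real, Real.norm_eq_abs, abs_of_pos hnl]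
    calc ‖x₀ + l • y‖ ≤ ‖((1:ℂ) - (‖l‖:ℂ)) • x₀‖ + ‖(‖l‖:ℂ) • (x₀ + u • y)‖ := by
          rw [hdecomp]; exact norm_add_le _ _
      _ = (1 - ‖l‖) * ‖x₀‖ + ‖l‖ * ‖x₀ + u • y‖ := by rw [norm_smul, norm_smul, h1, h2]
      _ ≤ 1 := by nlinarith [norm_nonneg (x₀ + u • y), norm_nonneg x₀]

lemma outer_bound {X : Type*} [NormedAddCommGroup X] [NormedSpace ℂ X]
    {x₀ y : X} (hx₀ : ‖x₀‖ ≤ 1)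
    (hy : ∀ θ : ℝ, ‖x₀ + Complex.exp (θ * Complex.I) • y‖ ≤ 1)
    {l : ℂ} (hl : 1 ≤ ‖l‖) : ‖x₀ + l • y‖ ≤ 1 + (‖l‖ - 1) * ‖y‖ := by
  have hne : l ≠ 0 := by intro h; rw [h, norm_zero] at hl; linarith
  set u : ℂ := (‖l‖ : ℂ)⁻¹ * l with hu
  have hnl : (0:ℝ) < ‖l‖ := norm_pos_iff.mpr hne
  have hnl' : ((‖l‖ : ℝ) : ℂ) ≠ 0 := by exact_mod_cast hnl.ne'
  have habs : ‖l‖ ≠ 0 := norm_ne_zero_iff.mpr hne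
  have hunorm : ‖u‖ = 1 := by
    rw [hu, norm_mul, norm_inv, Complex.norm_real, Real.norm_eq_abs, abs_of_pos hnl]
    field_simp
  have hun : ‖x₀ + u • y‖ ≤ 1 := unimod_bound hx₀ hy hunorm
  have hdecomp : x₀ + l • y = (x₀ + u • y) + (l - u) • y := by
    rw [sub_smul]; abel
  have hlu : ‖l - u‖ = ‖l‖ - 1 := by
    have : l - u = ((1 : ℂ) - (‖l‖:ℂ)⁻¹) * l := by rw [hu]; ring
    rw [this, norm_mul, show (1:ℂ) - (‖l‖:ℂ)⁻¹ = ((1 - ‖l‖⁻¹ : ℝ) : ℂ) by push_cast; ring,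
      Complex.norm_real, Real.norm_eq_abs,
      abs_of_nonneg (by rw [sub_nonneg]; exact inv_le_one_of_one_le₀ hl)]
    rw [sub_mul, one_mul, inv_mul_cancel₀ hnl.ne']
  calc ‖x₀ + l • y‖ ≤ ‖x₀ + u • y‖ + ‖(l - u) • y‖ := by rw [hdecomp]; exact norm_add_le _ _
    _ ≤ 1 + (‖l‖ - 1) * ‖y‖ := by rw [norm_smul, hlu]; linarith

lemma exists_peak_dir {X : Type*} [NormedAddCommGroup X] [NormedSpace ℂ X]
    {f : X → ℂ} (hdiff : DifferentiableOn ℂ f (ball (0:X) 1))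
    {x₀ y : X} (hx₀ : ‖x₀‖ ≤ 1)
    (hy : ∀ θ : ℝ, ‖x₀ + Complex.exp (θ * Complex.I) • y‖ ≤ 1)
    {ρ : ℝ} (h0 : 0 < ρ) (h1 : ρ < 1) :
    ∃ l : ℂ, ‖l‖ = 1 ∧ ‖f ((ρ:ℂ) • x₀)‖ ≤ ‖f ((ρ:ℂ) • (x₀ + l • y))‖ := by
  set R : ℝ := 1 + (1 - ρ)/(‖y‖ + 1) with hR
  have hy1 : (0:ℝ) < ‖y‖ + 1 := by positivity
  have hRpos : 0 < (1-ρ)/(‖y‖+1) := div_pos (by linarith) hy1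
  have hR1 : 1 < R := by rw [hR]; linarith
  have hmaps : ∀ l : ℂ, ‖l‖ ≤ R → (ρ:ℂ) • (x₀ + l • y) ∈ ball (0:X) 1 := by
    intro l hl
    have hb : ‖x₀ + l • y‖ ≤ 2 - ρ := by
      have hkey : (R - 1) * ‖y‖ ≤ 1 - ρ := by
        rw [hR]
        rw [show 1 + (1-ρ)/(‖y‖+1) - 1 = (1-ρ)/(‖y‖+1) by ring, div_mul_eq_mul_div,
          div_le_iff₀ hy1]
        nlinarith [norm_nonneg y]
      rcases le_total ‖l‖ 1 with h | h
      · have := ball_bound hx₀ hy h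
        linarith
      · have h2 := outer_bound hx₀ hy h
        have h3 : (‖l‖ - 1) * ‖y‖ ≤ (R - 1) * ‖y‖ := by
          have := norm_nonneg y
          nlinarith
        linarith
    rw [mem_ball_zero_iff, norm_smul, Complex.norm_real, Real.norm_eq_abs, abs_of_pos h0]
    nlinarith
  set g : ℂ → ℂ := fun l => f ((ρ:ℂ) • (x₀ + l • y)) with hgdef
  have hin : Differentiable ℂ (fun l : ℂ => (ρ:ℂ) • (x₀ + l • y)) :=
    ((differentiable_const x₀).add (differentiable_id.smul_const y)).const_smul _
  have hg : DifferentiableOn ℂ g (ball (0:ℂ) R) :=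
    hdiff.comp hin.differentiableOn
      (fun l hl => hmaps l (le_of_lt (by rwa [mem_ball_zero_iff] at hl)))
  have hgc : DiffContOnCl ℂ g (ball (0:ℂ) 1) := by
    apply DifferentiableOn.diffContOnCl
    rw [closure_ball (0:ℂ) one_ne_zero]
    exact hg.mono (closedBall_subset_ball hR1)
  have hsub : sphere (0:ℂ) 1 ⊆ ball (0:ℂ) R := by
    intro z hz
    rw [mem_sphere_zero_iff_norm] at hz
    rw [mem_ball_zero_iff, hz]; exact hR1
  obtain ⟨lstar, hmem, hmax⟩ := (isCompact_sphere (0:ℂ) 1).exists_isMaxOn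
    (NormedSpace.sphere_nonempty.mpr zero_le_one)
    ((hg.continuousOn.mono hsub).norm)
  have hbound : ‖g 0‖ ≤ ‖g lstar‖ :=
    Complex.norm_le_of_forall_mem_frontier_norm_le isBounded_ball hgc
      (fun z hz => hmax (by rwa [frontier_ball (0:ℂ) one_ne_zero] at hz))
      (by rw [closure_ball (0:ℂ) one_ne_zero]; exact mem_closedBall_self zero_le_one)
  refine ⟨lstar, by rwa [mem_sphere_zero_iff_norm] at hmem, ?_⟩
  simpa [hgdef] using hbound

set_option maxHeartbeats 1000000 in
/-- every strong peak point of `A_u(B_X)` or `A_b(B_X)` is a complex extreme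
point of the unit ball. -/
theorem statement13 {X : Type*} [NormedAddCommGroup X] [NormedSpace ℂ X] [CompleteSpace X]
    (f : X → ℂ) (hf : MemAb f ∨ MemAu f) (x₀ : X) (hp : StrongPeakAt f x₀) :
    ComplexExtremePoint x₀ := by
  obtain ⟨hcont, hbd, hdiff⟩ : MemAb f := hf.elim id And.left
  obtain ⟨C, hC⟩ := hbd
  set S := (fun x => ‖f x‖) '' Metric.closedBall (0:X) 1 with hS
  have hsup : supNorm f = sSup S := rfl
  have hSne : S.Nonempty := ⟨‖f 0‖, 0, mem_closedBall_self zero_le_one, rfl⟩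
  have hSbdd : BddAbove S := ⟨C, by rintro _ ⟨x, hx, rfl⟩; exact hC x hx⟩
  have hle : ∀ x ∈ Metric.closedBall (0:X) 1, ‖f x‖ ≤ supNorm f := by
    intro x hx; rw [hsup]; exact le_csSup hSbdd ⟨x, hx, rfl⟩
  obtain ⟨u, -, hut, hum⟩ := exists_seq_tendsto_sSup hSne hSbdd
  choose xs hxsm hxse using hum
  have hxst : Tendsto (fun n => ‖f (xs n)‖) atTop (𝓝 (supNorm f)) := by
    rw [hsup, funext hxse]; exact hut
  have hxs0 : Tendsto xs atTop (𝓝 x₀) := hp.2 xs hxsm hxst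
  have hx₀mem : x₀ ∈ Metric.closedBall (0:X) 1 :=
    Metric.isClosed_closedBall.mem_of_tendsto hxs0 (Eventually.of_forall hxsm)
  have hx₀n : ‖x₀‖ ≤ 1 := by rwa [← mem_closedBall_zero_iff]
  have hcx₀ : ContinuousWithinAt f (Metric.closedBall (0:X) 1) x₀ := hcont x₀ hx₀mem
  have hfx₀ : ‖f x₀‖ = supNorm f := by
    have h1 : Tendsto (fun n => f (xs n)) atTop (𝓝 (f x₀)) :=
      hcx₀.tendsto.comp
        (tendsto_nhdsWithin_of_tendsto_nhds_of_eventually_within xs hxs0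
          (Eventually.of_forall hxsm))
    exact tendsto_nhds_unique h1.norm hxst
  refine ⟨hx₀mem, fun y hy => ?_⟩
  set r : ℕ → ℝ := fun n => 1 - 1/(n+2) with hr
  have hr0 : ∀ n, 0 < r n := by
    intro n; rw [hr]
    have h2 : (1:ℝ) < (n:ℝ) + 2 := by have := Nat.cast_nonneg (α := ℝ) n; linarith
    have : (1:ℝ)/((n:ℝ)+2) < 1 := by rw [div_lt_one (by linarith)]; exact h2
    simp only []; linarith
  have hr1 : ∀ n, r n < 1 := by
    intro n; rw [hr]
    have h2 : (0:ℝ) < (n:ℝ) + 2 := by have := Nat.cast_nonneg (α := ℝ) n; linarith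
    have : (0:ℝ) < 1/((n:ℝ)+2) := by positivity
    simp only []; linarith
  have hinv : Tendsto (fun n : ℕ => ((n:ℝ)+2)⁻¹) atTop (𝓝 0) :=
    (tendsto_atTop_add_const_right atTop 2 tendsto_natCast_atTop_atTop).inv_tendsto_atTop
  have hrt : Tendsto r atTop (𝓝 1) := by
    have h := (tendsto_const_nhds (x := (1:ℝ)) (f := (atTop : Filter ℕ))).sub hinv
    simpa [hr, one_div] using h
  have hct : Tendsto (fun n => ((r n : ℝ) : ℂ)) atTop (𝓝 1) := by
    have := (Complex.continuous_ofReal.tendsto 1).comp hrt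
    exact this
  have hsel : ∀ n, ∃ l : ℂ, ‖l‖ = 1 ∧
      ‖f ((r n : ℂ) • x₀)‖ ≤ ‖f ((r n : ℂ) • (x₀ + l • y))‖ :=
    fun n => exists_peak_dir hdiff hx₀n hy (hr0 n) (hr1 n)
  choose ls hls1 hls2 using hsel
  set zs : ℕ → X := fun n => ((r n : ℝ) : ℂ) • (x₀ + ls n • y) with hzs
  have hzmem : ∀ n, zs n ∈ Metric.closedBall (0:X) 1 := by
    intro n
    rw [hzs, mem_closedBall_zero_iff, norm_smul, Complex.norm_real, Real.norm_eq_abs,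
      abs_of_pos (hr0 n)]
    have h1 := ball_bound hx₀n hy (le_of_eq (hls1 n))
    nlinarith [hr0 n, hr1 n]
  have hmidmem : ∀ n, ((r n : ℝ) : ℂ) • x₀ ∈ Metric.closedBall (0:X) 1 := by
    intro n
    rw [mem_closedBall_zero_iff, norm_smul, Complex.norm_real, Real.norm_eq_abs,
      abs_of_pos (hr0 n)]
    nlinarith [hr0 n, hr1 n, norm_nonneg x₀]
  have htmid : Tendsto (fun n => ((r n : ℝ) : ℂ) • x₀) atTop (𝓝 x₀) := by
    have := hct.smul_const x₀
    simpa using this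
  have hfmid : Tendsto (fun n => ‖f (((r n : ℝ) : ℂ) • x₀)‖) atTop (𝓝 (supNorm f)) := by
    rw [← hfx₀]
    exact (hcx₀.tendsto.comp
      (tendsto_nhdsWithin_of_tendsto_nhds_of_eventually_within _ htmid
        (Eventually.of_forall hmidmem))).norm
  have hfz : Tendsto (fun n => ‖f (zs n)‖) atTop (𝓝 (supNorm f)) :=
    tendsto_of_tendsto_of_tendsto_of_le_of_le hfmid tendsto_const_nhds
      (fun n => hls2 n) (fun n => hle _ (hzmem n))
  have hz0 : Tendsto zs atTop (𝓝 x₀) := hp.2 zs hzmem hfz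
  obtain ⟨lst, hlstmem, φ, hφ, hlst⟩ := (isCompact_sphere (0:ℂ) 1).tendsto_subseq
    (fun n => mem_sphere_zero_iff_norm.mpr (hls1 n))
  have h1 : Tendsto (fun n => zs (φ n)) atTop (𝓝 x₀) := hz0.comp hφ.tendsto_atTop
  have h2 : Tendsto (fun n => zs (φ n)) atTop (𝓝 (x₀ + lst • y)) := by
    have hc : Tendsto (fun n => ((r (φ n) : ℝ) : ℂ)) atTop (𝓝 1) := hct.comp hφ.tendsto_atTop
    have hadd : Tendsto (fun n => x₀ + (ls (φ n)) • y) atTop (𝓝 (x₀ + lst • y)) :=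
      (tendsto_const_nhds (x := x₀) (f := (atTop : Filter ℕ))).add (hlst.smul_const y)
    have := hc.smul hadd
    simpa [hzs, Function.comp] using this
  have heq : x₀ + lst • y = x₀ := tendsto_nhds_unique h2 h1
  have hzero : lst • y = 0 := by
    have := heq
    rwa [add_eq_left] at this
  have hlstne : lst ≠ 0 := by
    rw [mem_sphere_zero_iff_norm] at hlstmem
    intro h; rw [h, norm_zero] at hlstmem; norm_num at hlstmem
  exact (smul_eq_zero.mp hzero).resolve_left hlstne
end

section
/- Let X and Y be complex Banach spaces and H a subspace of A(B_X : Y) (where A denotes either A_u or A_b). Then the set ρ̃H of strong norm-attainment points of elements of H is contained in the set ρA(B_X : Y) of strong peak points, which is contained in the set of complex extreme points of B_X. -/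
open Metric Filter Topology Set

section Helpers

variable {X Y : Type*} [NormedAddCommGroup X] [NormedSpace ℂ X]
  [NormedAddCommGroup Y] [NormedSpace ℂ Y]

lemma norm_le_supNorm_s14 {f : X → Y} {C : ℝ}
    (hC : ∀ x ∈ Metric.closedBall (0 : X) 1, ‖f x‖ ≤ C) {z : X}
    (hz : z ∈ Metric.closedBall (0 : X) 1) : ‖f z‖ ≤ supNorm f := by
  apply le_csSup
  · exact ⟨C, by rintro _ ⟨x, hx, rfl⟩; exact hC x hx⟩
  · exact ⟨z, hz, rfl⟩

lemma exists_maximizing {f : X → Y} {C : ℝ}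
    (hC : ∀ x ∈ Metric.closedBall (0 : X) 1, ‖f x‖ ≤ C) :
    ∃ xs : ℕ → X, (∀ n, xs n ∈ Metric.closedBall (0 : X) 1) ∧
      Tendsto (fun n => ‖f (xs n)‖) atTop (nhds (supNorm f)) := by
  have hne : ((fun x => ‖f x‖) '' Metric.closedBall (0 : X) 1).Nonempty :=
    ⟨‖f 0‖, 0, Metric.mem_closedBall_self zero_le_one, rfl⟩
  have hsel : ∀ n : ℕ, ∃ x, x ∈ Metric.closedBall (0 : X) 1 ∧
      supNorm f - 1 / (n + 1) < ‖f x‖ := by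
    intro n
    have hlt : supNorm f - 1 / (n + 1) < supNorm f := by
      have : (0 : ℝ) < 1 / (n + 1) := by positivity
      linarith
    obtain ⟨b, hb, hb2⟩ := exists_lt_of_lt_csSup hne hlt
    obtain ⟨x, hx, rfl⟩ := hb
    exact ⟨x, hx, hb2⟩
  choose xs hxs h2 using hsel
  refine ⟨xs, hxs, ?_⟩
  have hlow : Tendsto (fun n : ℕ => supNorm f - 1 / (n + 1)) atTop (nhds (supNorm f)) := by
    have : Tendsto (fun n : ℕ => 1 / ((n : ℝ) + 1)) atTop (nhds 0) := tendsto_one_div_add_atTop_nhds_zero_nat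
    have h := tendsto_const_nhds (x := supNorm f) (f := atTop (α := ℕ)) |>.sub this
    simpa using h
  refine tendsto_of_tendsto_of_tendsto_of_le_of_le hlow tendsto_const_nhds
    (fun n => (h2 n).le) (fun n => norm_le_supNorm_s14 hC (hxs n))

lemma tendsto_comp_ball {f : X → Y} (hcont : ContinuousOn f (Metric.closedBall (0 : X) 1))
    {xs : ℕ → X} {z : X} (hxs : ∀ n, xs n ∈ Metric.closedBall (0 : X) 1)
    (hz : z ∈ Metric.closedBall (0 : X) 1) (hlim : Tendsto xs atTop (nhds z)) :
    Tendsto (fun n => f (xs n)) atTop (nhds (f z)) := by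
  have h1 : Tendsto xs atTop (nhdsWithin z (Metric.closedBall (0 : X) 1)) :=
    tendsto_nhdsWithin_iff.2 ⟨hlim, Filter.Eventually.of_forall hxs⟩
  exact (hcont z hz).tendsto.comp h1

lemma unimodular_eq_one {γ : ℂ} (h1 : ‖γ‖ ≤ 1) (h2 : ‖1 + γ‖ = 2) : γ = 1 := by
  have e1 : γ.re * γ.re + γ.im * γ.im ≤ 1 := by
    have : ‖γ‖ ^ 2 ≤ 1 := by
      calc ‖γ‖ ^ 2 ≤ 1 ^ 2 := pow_le_pow_left₀ (norm_nonneg γ) h1 2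
      _ = 1 := one_pow 2
    rwa [Complex.sq_norm, Complex.normSq_apply] at this
  have e2 : (1 + γ.re) * (1 + γ.re) + γ.im * γ.im = 4 := by
    have : ‖1 + γ‖ ^ 2 = 4 := by rw [h2]; norm_num
    rw [Complex.sq_norm, Complex.normSq_apply] at this
    simpa using this
  have ha : γ.re = 1 := by nlinarith [sq_nonneg γ.im, sq_nonneg (γ.re - 1)]
  have hb : γ.im = 0 := by nlinarith
  exact Complex.ext (by simp [ha]) (by simp [hb])

lemma ball_convex_aux {x y : X} (hx : ‖x‖ ≤ 1)
    (h : ∀ θ : ℝ, ‖x + Complex.exp (θ * Complex.I) • y‖ ≤ 1) {lam : ℂ}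
    (hl : ‖lam‖ ≤ 1) : ‖x + lam • y‖ ≤ 1 := by
  by_cases hl0 : lam = 0
  · simpa [hl0] using hx
  · set s : ℝ := ‖lam‖ with hs
    have hs0 : 0 < s := norm_pos_iff.2 hl0
    have key : (s : ℂ) * Complex.exp (lam.arg * Complex.I) = lam := by
      rw [hs]
      exact Complex.norm_mul_exp_arg_mul_I lam
    have hsm : s • (Complex.exp (lam.arg * Complex.I) • y) = lam • y := by
      rw [← smul_assoc]
      congr 1
    have decomp : x + lam • y
        = (1 - s) • x + s • (x + Complex.exp (lam.arg * Complex.I) • y) := by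
      rw [smul_add, hsm, ← add_assoc, ← add_smul, sub_add_cancel, one_smul]
    rw [decomp]
    have h1 : ‖(1 - s) • x‖ ≤ 1 - s := by
      rw [norm_smul, Real.norm_eq_abs, abs_of_nonneg (by linarith)]
      nlinarith
    have h2 : ‖s • (x + Complex.exp (lam.arg * Complex.I) • y)‖ ≤ s := by
      rw [norm_smul, Real.norm_eq_abs, abs_of_nonneg hs0.le]
      nlinarith [h lam.arg]
    calc ‖(1 - s) • x + s • (x + Complex.exp (lam.arg * Complex.I) • y)‖
        ≤ ‖(1 - s) • x‖ + ‖s • (x + Complex.exp (lam.arg * Complex.I) • y)‖ :=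
          norm_add_le _ _
      _ ≤ (1 - s) + s := add_le_add h1 h2
      _ = 1 := by ring

/-- Second inclusion, as a standalone lemma. -/
lemma peak_complex_extreme [CompleteSpace X] [CompleteSpace Y] {f : X → Y} {x₀ : X}
    (hf : MemAb f) (hp : StrongPeakAt f x₀) : ComplexExtremePoint x₀ := by
  obtain ⟨hcont, ⟨C, hC⟩, hdiff⟩ := hf
  -- maximizing sequence converges to x₀
  obtain ⟨xs, hxs, hxst⟩ := exists_maximizing hC
  have hx₀t : Tendsto xs atTop (nhds x₀) := hp.2 xs hxs hxst
  have hx₀b : x₀ ∈ Metric.closedBall (0 : X) 1 :=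
    Metric.isClosed_closedBall.mem_of_tendsto hx₀t (Filter.Eventually.of_forall hxs)
  have hx₀n : ‖x₀‖ ≤ 1 := by rwa [Metric.mem_closedBall, dist_zero_right] at hx₀b
  have hfx₀ : ‖f x₀‖ = supNorm f := by
    have h1 : Tendsto (fun n => ‖f (xs n)‖) atTop (nhds ‖f x₀‖) :=
      (tendsto_comp_ball hcont hxs hx₀b hx₀t).norm
    exact tendsto_nhds_unique h1 hxst
  refine ⟨hx₀b, fun y hy => ?_⟩
  -- the closed ball contains x₀ + lam • y for all |lam| ≤ 1
  have hball : ∀ lam : ℂ, ‖lam‖ ≤ 1 → x₀ + lam • y ∈ Metric.closedBall (0 : X) 1 := by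
    intro lam hlam
    rw [Metric.mem_closedBall, dist_zero_right]
    exact ball_convex_aux hx₀n hy hlam
  set r : ℕ → ℝ := fun n => 1 - 1 / (n + 2) with hr
  have hr0 : ∀ n, 0 ≤ r n := by
    intro n
    have h1 : 1 / ((n : ℝ) + 2) ≤ 1 := by
      rw [div_le_one (by positivity)]; linarith
    simp only [hr]; linarith
  have hr1 : ∀ n, r n < 1 := by
    intro n
    have h1 : 0 < 1 / ((n : ℝ) + 2) := by positivity
    simp only [hr]; linarith
  have hrt : Tendsto r atTop (nhds 1) := by
    have hb : Tendsto (fun n : ℕ => ((n : ℝ) + 2)) atTop atTop :=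
      tendsto_atTop_add_const_right _ 2 tendsto_natCast_atTop_atTop
    have h0 : Tendsto (fun n : ℕ => 1 / ((n : ℝ) + 2)) atTop (nhds 0) := by
      simpa [one_div, Function.comp_def] using tendsto_inv_atTop_zero.comp hb
    have h1 : Tendsto (fun n : ℕ => 1 - 1 / ((n : ℝ) + 2)) atTop (nhds (1 - 0)) :=
      tendsto_const_nhds.sub h0
    rw [sub_zero] at h1
    exact h1
  have hmem : ∀ n (lam : ℂ), ‖lam‖ ≤ 1 → r n • (x₀ + lam • y) ∈ Metric.ball (0 : X) 1 := by
    intro n lam hlam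
    rw [Metric.mem_ball, dist_zero_right, norm_smul, Real.norm_eq_abs,
      abs_of_nonneg (hr0 n)]
    calc r n * ‖x₀ + lam • y‖ ≤ r n * 1 :=
          mul_le_mul_of_nonneg_left (ball_convex_aux hx₀n hy hlam) (hr0 n)
      _ < 1 := by rw [mul_one]; exact hr1 n
  -- for each n, find a sphere point where ‖f (r n • (x₀ + lam • y))‖ ≥ ‖f (r n • x₀)‖
  have hstep : ∀ n : ℕ, ∃ lam : ℂ, lam ∈ Metric.sphere (0 : ℂ) 1 ∧
      ‖f (r n • x₀)‖ ≤ ‖f (r n • (x₀ + lam • y))‖ := by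
    intro n
    set g : ℂ → Y := fun lam => f (r n • (x₀ + lam • y)) with hg
    have hA : Differentiable ℂ (fun lam : ℂ => r n • (x₀ + lam • y)) := by
      have : (fun lam : ℂ => x₀ + lam • y)
          = fun lam : ℂ => x₀ + (ContinuousLinearMap.toSpanSingleton ℂ y) lam := rfl
      exact ((differentiable_const x₀).add
        (ContinuousLinearMap.toSpanSingleton ℂ y).differentiable).const_smul (r n)
    have hgd : DiffContOnCl ℂ g (Metric.ball (0 : ℂ) 1) := by
      constructor
      · apply DifferentiableOn.comp hdiff (hA.differentiableOn)
        intro lam hlam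
        exact hmem n lam (le_of_lt (by rwa [Metric.mem_ball, dist_zero_right] at hlam))
      · rw [closure_ball (0 : ℂ) one_ne_zero]
        apply ContinuousOn.comp hcont hA.continuous.continuousOn
        intro lam hlam
        exact Metric.ball_subset_closedBall
          (hmem n lam (by rwa [Metric.mem_closedBall, dist_zero_right] at hlam))
    obtain ⟨lam, hlamS, hlammax⟩ :=
      (isCompact_sphere (0 : ℂ) 1).exists_isMaxOn ⟨1, by simp⟩
        ((hgd.continuousOn.mono (by
          rw [closure_ball (0 : ℂ) one_ne_zero]
          exact Metric.sphere_subset_closedBall)).norm)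
    refine ⟨lam, hlamS, ?_⟩
    have h0 : ‖g 0‖ ≤ ‖g lam‖ := by
      apply Complex.norm_le_of_forall_mem_frontier_norm_le Metric.isBounded_ball hgd
      · intro z hz
        rw [frontier_ball (0 : ℂ) one_ne_zero] at hz
        exact hlammax hz
      · exact subset_closure (Metric.mem_ball_self one_pos)
    simpa [hg] using h0
  choose lam hlamS hlamge using hstep
  obtain ⟨lam0, hlam0S, σ, hσ, hσt⟩ := (isCompact_sphere (0 : ℂ) 1).tendsto_subseq hlamS
  have hlam0n : ‖lam0‖ = 1 := by rwa [Metric.mem_sphere, dist_zero_right] at hlam0S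
  -- the limit point x₀ + lam0 • y has maximal norm value
  have hlimpt : x₀ + lam0 • y ∈ Metric.closedBall (0 : X) 1 := hball lam0 hlam0n.le
  have hlamn : ∀ n, ‖lam n‖ = 1 := by
    intro n
    have := hlamS n; rwa [Metric.mem_sphere, dist_zero_right] at this
  have hzs : ∀ k, r (σ k) • (x₀ + lam (σ k) • y) ∈ Metric.closedBall (0 : X) 1 :=
    fun k => Metric.ball_subset_closedBall (hmem (σ k) (lam (σ k)) (hlamn (σ k)).le)
  have hzt : Tendsto (fun k => r (σ k) • (x₀ + lam (σ k) • y)) atTop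
      (nhds (x₀ + lam0 • y)) := by
    have h1 : Tendsto (fun k => x₀ + lam (σ k) • y) atTop (nhds (x₀ + lam0 • y)) :=
      tendsto_const_nhds.add (hσt.smul_const y)
    have h2 : Tendsto (fun k => r (σ k)) atTop (nhds 1) :=
      hrt.comp hσ.tendsto_atTop
    have := h2.smul h1
    simpa using this
  have hnormt : Tendsto (fun k => ‖f (r (σ k) • (x₀ + lam (σ k) • y))‖) atTop
      (nhds ‖f (x₀ + lam0 • y)‖) :=
    (tendsto_comp_ball hcont hzs hlimpt hzt).norm
  have hrx₀t : Tendsto (fun k => ‖f (r (σ k) • x₀)‖) atTop (nhds (supNorm f)) := by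
    have hmemr : ∀ k, r (σ k) • x₀ ∈ Metric.closedBall (0 : X) 1 := by
      intro k
      rw [Metric.mem_closedBall, dist_zero_right, norm_smul, Real.norm_eq_abs,
        abs_of_nonneg (hr0 _)]
      nlinarith [hr1 (σ k), hr0 (σ k), norm_nonneg x₀]
    have ht : Tendsto (fun k => r (σ k) • x₀) atTop (nhds x₀) := by
      have := (hrt.comp hσ.tendsto_atTop).smul_const x₀
      simpa using this
    have := (tendsto_comp_ball hcont hmemr hx₀b ht).norm
    rwa [hfx₀] at this
  have hge : supNorm f ≤ ‖f (x₀ + lam0 • y)‖ :=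
    le_of_tendsto_of_tendsto' hrx₀t hnormt (fun k => hlamge (σ k))
  have heq : ‖f (x₀ + lam0 • y)‖ = supNorm f :=
    le_antisymm (norm_le_supNorm_s14 hC hlimpt) hge
  -- the constant sequence at x₀ + lam0 • y is maximizing, hence converges to x₀
  have hconst : Tendsto (fun _ : ℕ => x₀ + lam0 • y) atTop (nhds x₀) :=
    hp.2 (fun _ => x₀ + lam0 • y) (fun _ => hlimpt)
      (by rw [show (fun _ : ℕ => ‖f (x₀ + lam0 • y)‖) = fun _ => supNorm f from
        funext fun _ => heq]; exact tendsto_const_nhds)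
  have : x₀ + lam0 • y = x₀ := tendsto_nhds_unique tendsto_const_nhds hconst
  have hly : lam0 • y = 0 := by
    have := congrArg (fun z => z - x₀) this
    simpa [add_sub_cancel_left] using this
  rcases smul_eq_zero.1 hly with h | h
  · exact absurd h (by intro h0; rw [h0] at hlam0n; simp at hlam0n)
  · exact h

/-- Construction of a strong peak function from a strongly norm attaining function. -/
lemma construction [CompleteSpace X] [CompleteSpace Y] {f : X → Y} {x₀ : X} {α : ℂ} {C : ℝ}
    (hcont : ContinuousOn f (Metric.closedBall (0 : X) 1))
    (hC : ∀ x ∈ Metric.closedBall (0 : X) 1, ‖f x‖ ≤ C)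
    (hdiff : DifferentiableOn ℂ f (Metric.ball (0 : X) 1))
    (hα : ‖α‖ = 1) (hx₀ : ‖x₀‖ = 1)
    (hfz : ‖f (α • x₀)‖ = supNorm f) (hM : 0 < supNorm f)
    (hatt : StronglyAttains ℂ f x₀) :
    ∃ h : X → Y, MemAb h ∧
      (UniformContinuousOn f (Metric.closedBall (0 : X) 1) →
        UniformContinuousOn h (Metric.closedBall (0 : X) 1)) ∧ StrongPeakAt h x₀ := by
  set M : ℝ := supNorm f with hMdef
  have hx₀ne : x₀ ≠ 0 := by intro h0; rw [h0, norm_zero] at hx₀; norm_num at hx₀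
  obtain ⟨xstar, hxs1, hxs2⟩ := exists_dual_vector ℂ x₀ (norm_ne_zero_iff.2 hx₀ne)
  have hxsx₀ : xstar x₀ = 1 := by rw [hxs2, hx₀]; norm_num
  have hfz0ne : f (α • x₀) ≠ 0 := by
    intro h0; rw [h0, norm_zero] at hfz; linarith
  obtain ⟨ystar, hys1, hys2⟩ := exists_dual_vector ℂ (f (α • x₀)) (norm_ne_zero_iff.2 hfz0ne)
  set y₀ : Y := ‖f (α • x₀)‖⁻¹ • f (α • x₀) with hy₀def
  have hy₀ : ‖y₀‖ = 1 := by
    rw [hy₀def, norm_smul, norm_inv, norm_norm, inv_mul_cancel₀ (norm_ne_zero_iff.2 hfz0ne)]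
  set ψ : X → ℂ := fun x => ystar (f (α • x)) + (2⁻¹ + 2⁻¹ * xstar x) with hψdef
  set h : X → Y := fun x => ψ x • y₀ with hhdef
  have hαmem : ∀ x ∈ Metric.closedBall (0 : X) 1, α • x ∈ Metric.closedBall (0 : X) 1 := by
    intro x hx
    rw [Metric.mem_closedBall, dist_zero_right] at hx ⊢
    rw [norm_smul, hα, one_mul]; exact hx
  have hαball : ∀ x ∈ Metric.ball (0 : X) 1, α • x ∈ Metric.ball (0 : X) 1 := by
    intro x hx
    rw [Metric.mem_ball, dist_zero_right] at hx ⊢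
    rw [norm_smul, hα, one_mul]; exact hx
  have hfbd : ∀ x ∈ Metric.closedBall (0 : X) 1, ‖ystar (f (α • x))‖ ≤ M := by
    intro x hx
    calc ‖ystar (f (α • x))‖ ≤ ‖ystar‖ * ‖f (α • x)‖ := ystar.le_opNorm _
      _ = ‖f (α • x)‖ := by rw [hys1, one_mul]
      _ ≤ M := norm_le_supNorm_s14 hC (hαmem x hx)
  have hhalf : ‖(2⁻¹ : ℂ)‖ = 2⁻¹ := by
    rw [show ((2 : ℂ)⁻¹) = ((2⁻¹ : ℝ) : ℂ) by push_cast; ring, Complex.norm_real,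
      Real.norm_eq_abs]
    norm_num
  have hqbd : ∀ x ∈ Metric.closedBall (0 : X) 1, ‖(2⁻¹ : ℂ) + 2⁻¹ * xstar x‖ ≤ 1 := by
    intro x hx
    rw [Metric.mem_closedBall, dist_zero_right] at hx
    have h1 : ‖xstar x‖ ≤ 1 := by
      calc ‖xstar x‖ ≤ ‖xstar‖ * ‖x‖ := xstar.le_opNorm _
        _ ≤ 1 := by rw [hxs1, one_mul]; exact hx
    calc ‖(2⁻¹ : ℂ) + 2⁻¹ * xstar x‖ ≤ ‖(2⁻¹ : ℂ)‖ + ‖(2⁻¹ : ℂ) * xstar x‖ := norm_add_le _ _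
      _ = 2⁻¹ + 2⁻¹ * ‖xstar x‖ := by rw [norm_mul, hhalf]
      _ ≤ 2⁻¹ + 2⁻¹ * 1 := by linarith
      _ = 1 := by norm_num
  have hψbd : ∀ x ∈ Metric.closedBall (0 : X) 1, ‖ψ x‖ ≤ M + 1 := by
    intro x hx
    calc ‖ψ x‖ ≤ ‖ystar (f (α • x))‖ + ‖(2⁻¹ : ℂ) + 2⁻¹ * xstar x‖ := norm_add_le _ _
      _ ≤ M + 1 := add_le_add (hfbd x hx) (hqbd x hx)
  have hψlb : ∀ x ∈ Metric.closedBall (0 : X) 1, ‖ψ x‖ - 1 ≤ ‖f (α • x)‖ := by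
    intro x hx
    have h1 : ‖ψ x‖ ≤ ‖ystar (f (α • x))‖ + 1 :=
      (norm_add_le _ _).trans (by linarith [hqbd x hx])
    have h2 : ‖ystar (f (α • x))‖ ≤ ‖f (α • x)‖ := by
      calc ‖ystar (f (α • x))‖ ≤ ‖ystar‖ * ‖f (α • x)‖ := ystar.le_opNorm _
        _ = ‖f (α • x)‖ := by rw [hys1, one_mul]
    linarith
  have hψx₀ : ψ x₀ = (M : ℂ) + 1 := by
    rw [hψdef]
    simp only []
    rw [hys2, hxsx₀, hfz]
    push_cast
    ring_nf
    rfl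
  have hx₀B : x₀ ∈ Metric.closedBall (0 : X) 1 := by
    rw [Metric.mem_closedBall, dist_zero_right, hx₀]
  have hnormh : ∀ x, ‖h x‖ = ‖ψ x‖ := by
    intro x; rw [hhdef]; simp only []; rw [norm_smul, hy₀, mul_one]
  have hhx₀ : ‖h x₀‖ = M + 1 := by
    rw [hnormh, hψx₀]
    rw [show ((M : ℂ) + 1) = ((M + 1 : ℝ) : ℂ) by push_cast; ring, Complex.norm_real,
      Real.norm_eq_abs, abs_of_nonneg (by linarith)]
  have hhbd : ∀ x ∈ Metric.closedBall (0 : X) 1, ‖h x‖ ≤ M + 1 := by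
    intro x hx; rw [hnormh]; exact hψbd x hx
  have hsup : supNorm h = M + 1 := by
    apply le_antisymm
    · refine csSup_le ⟨‖h x₀‖, ⟨x₀, hx₀B, rfl⟩⟩ ?_
      rintro b ⟨x, hx, rfl⟩
      exact hhbd x hx
    · apply le_csSup ⟨M + 1, by rintro b ⟨x, hx, rfl⟩; exact hhbd x hx⟩
      exact ⟨x₀, hx₀B, hhx₀⟩
  have hψcont : ContinuousOn ψ (Metric.closedBall (0 : X) 1) := by
    have hαc : ContinuousOn (fun x : X => f (α • x)) (Metric.closedBall (0 : X) 1) :=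
      hcont.comp (continuous_const_smul α).continuousOn hαmem
    exact (ystar.continuous.comp_continuousOn hαc).add
      (continuous_const.add (continuous_const.mul xstar.continuous)).continuousOn
  have hhcont : ContinuousOn h (Metric.closedBall (0 : X) 1) :=
    hψcont.smul continuousOn_const
  have hhdiff : DifferentiableOn ℂ h (Metric.ball (0 : X) 1) := by
    have hαd : DifferentiableOn ℂ (fun x : X => f (α • x)) (Metric.ball (0 : X) 1) :=
      hdiff.comp ((differentiable_id.const_smul α).differentiableOn) hαball
    have hψd : DifferentiableOn ℂ ψ (Metric.ball (0 : X) 1) :=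
      (ystar.differentiable.comp_differentiableOn hαd).add
        ((differentiable_const _).add (xstar.differentiable.const_mul _)).differentiableOn
    exact hψd.smul_const y₀
  have hmemAb : MemAb h := ⟨hhcont, ⟨M + 1, hhbd⟩, hhdiff⟩
  have hmemUc : UniformContinuousOn f (Metric.closedBall (0 : X) 1) →
      UniformContinuousOn h (Metric.closedBall (0 : X) 1) := by
    intro hfu
    rw [uniformContinuousOn_iff_restrict] at hfu ⊢
    set B := Metric.closedBall (0 : X) 1
    set m : B → B := fun x => ⟨α • (x : X), hαmem _ x.2⟩ with hm
    have hmu : UniformContinuous m := by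
      have h1 : UniformContinuous (fun x : B => α • (x : X)) :=
        ((α • ContinuousLinearMap.id ℂ X).uniformContinuous).comp uniformContinuous_subtype_val
      exact h1.subtype_mk _
    have h2 : UniformContinuous (fun x : B => ystar (f (α • (x : X)))) :=
      ystar.uniformContinuous.comp (hfu.comp hmu)
    have h3 : UniformContinuous (fun x : B => (2⁻¹ : ℂ) + 2⁻¹ * xstar (x : X)) := by
      have := (((2⁻¹ : ℂ) • xstar).uniformContinuous).comp
        (uniformContinuous_subtype_val (p := fun x => x ∈ B))
      exact uniformContinuous_const.add this
    have h4 : UniformContinuous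
        (fun x : B => (ContinuousLinearMap.toSpanSingleton ℂ y₀) (ψ (x : X))) :=
      (ContinuousLinearMap.toSpanSingleton ℂ y₀).uniformContinuous.comp (h2.add h3)
    have heq : B.domRestrict h = fun x : B =>
        (ContinuousLinearMap.toSpanSingleton ℂ y₀) (ψ (x : X)) := by
      funext x
      rw [ContinuousLinearMap.toSpanSingleton_apply]
      rfl
    rw [heq]
    exact h4
  refine ⟨h, hmemAb, hmemUc, ⟨x₀, hx₀B, ?_⟩, ?_⟩
  · intro h0
    rw [h0, norm_zero] at hhx₀
    linarith
  · intro zs hzs hzt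
    rw [hsup] at hzt
    apply tendsto_of_subseq_tendsto
    intro ns hns
    have hws : ∀ n, zs (ns n) ∈ Metric.closedBall (0 : X) 1 := fun n => hzs _
    have hwt : Tendsto (fun n => ‖h (zs (ns n))‖) atTop (nhds (M + 1)) := hzt.comp hns
    have hψt : Tendsto (fun n => ‖ψ (zs (ns n))‖) atTop (nhds (M + 1)) := by
      have heq2 : (fun n => ‖ψ (zs (ns n))‖) = fun n => ‖h (zs (ns n))‖ :=
        funext fun n => (hnormh _).symm
      rw [heq2]; exact hwt
    have hft : Tendsto (fun n => ‖f (α • zs (ns n))‖) atTop (nhds M) := by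
      apply tendsto_of_tendsto_of_tendsto_of_le_of_le
        (g := fun n => ‖ψ (zs (ns n))‖ - 1) (h := fun _ : ℕ => M)
      · have := hψt.sub (tendsto_const_nhds (x := (1:ℝ)))
        rw [add_sub_cancel_right] at this
        exact this
      · exact tendsto_const_nhds
      · exact fun n => hψlb _ (hws n)
      · exact fun n => norm_le_supNorm_s14 hC (hαmem _ (hws n))
    obtain ⟨γ, ms, hms, hγ1, hconv⟩ :=
      hatt (fun n => α • zs (ns n)) (fun n => hαmem _ (hws n)) hft
    refine ⟨ms, ?_⟩
    have hαne : α ≠ 0 := by intro h0; rw [h0, norm_zero] at hα; norm_num at hα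
    have hwms : Tendsto (fun k => zs (ns (ms k))) atTop (nhds ((α⁻¹ * γ) • x₀)) := by
      have h1 := hconv.const_smul α⁻¹
      have he1 : (fun k => α⁻¹ • ((fun n => α • zs (ns n)) (ms k))) =
          fun k => zs (ns (ms k)) := by
        funext k
        rw [smul_smul, inv_mul_cancel₀ hαne, one_smul]
      have he2 : α⁻¹ • (γ • x₀) = (α⁻¹ * γ) • x₀ := smul_smul _ _ _
      rw [he1, he2] at h1
      exact h1
    set δ : ℂ := α⁻¹ * γ with hδdef
    have hδ1 : ‖δ‖ = 1 := by rw [hδdef, norm_mul, norm_inv, hα, hγ1]; norm_num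
    have hδx₀B : δ • x₀ ∈ Metric.closedBall (0 : X) 1 := by
      rw [Metric.mem_closedBall, dist_zero_right, norm_smul, hδ1, hx₀, one_mul]
    have h5 : Tendsto (fun k => ‖h (zs (ns (ms k)))‖) atTop (nhds ‖h (δ • x₀)‖) :=
      (tendsto_comp_ball hhcont (fun k => hws _) hδx₀B hwms).norm
    have h6 : ‖h (δ • x₀)‖ = M + 1 :=
      tendsto_nhds_unique h5 (hwt.comp hms.tendsto_atTop)
    have h7 : ‖ψ (δ • x₀)‖ = M + 1 := by rw [← hnormh]; exact h6
    have h8 : ψ (δ • x₀) = ystar (f (α • δ • x₀)) + 2⁻¹ * (1 + δ) := by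
      rw [hψdef]
      simp only []
      rw [map_smul, smul_eq_mul, hxsx₀]
      ring_nf
    have hδx₀B' : α • δ • x₀ ∈ Metric.closedBall (0 : X) 1 := hαmem _ hδx₀B
    have hfb2 : ‖ystar (f (α • δ • x₀))‖ ≤ M := hfbd _ hδx₀B
    have h10 : (2 : ℝ) ≤ ‖(1 : ℂ) + δ‖ := by
      have h11 := norm_add_le (ystar (f (α • δ • x₀))) (2⁻¹ * (1 + δ))
      rw [← h8, h7] at h11
      have h12 : ‖(2⁻¹ : ℂ) * (1 + δ)‖ = 2⁻¹ * ‖(1 : ℂ) + δ‖ := by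
        rw [norm_mul, hhalf]
      rw [h12] at h11
      linarith
    have h11 : ‖(1 : ℂ) + δ‖ ≤ 2 := by
      calc ‖(1 : ℂ) + δ‖ ≤ ‖(1 : ℂ)‖ + ‖δ‖ := norm_add_le _ _
        _ = 2 := by rw [norm_one, hδ1]; norm_num
    have hδeq : δ = 1 := unimodular_eq_one hδ1.le (le_antisymm h11 h10)
    rw [hδeq, one_smul] at hwms
    exact hwms

end Helpers

/-- for a subspace `H` of `A(B_X : Y)` (where `A` is `A_b` or `A_u`),
`ρ̃H ⊆ ρA(B_X : Y) ⊆ ext_ℂ(B_X)`. -/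
theorem statement14 {X Y : Type*} [NormedAddCommGroup X] [NormedSpace ℂ X] [CompleteSpace X]
    [NormedAddCommGroup Y] [NormedSpace ℂ Y] [CompleteSpace Y]
    (H A : Set (X → Y))
    (hA : A = {f | MemAb f} ∨ A = {f | MemAu f}) (hH : H ⊆ A) :
    {x₀ | ∃ f ∈ H, (∃ x ∈ Metric.closedBall (0 : X) 1, f x ≠ 0) ∧ StronglyAttains ℂ f x₀}
        ⊆ {x₀ | ∃ f ∈ A, StrongPeakAt f x₀} ∧
      {x₀ | ∃ f ∈ A, StrongPeakAt f x₀} ⊆ {x | ComplexExtremePoint x} := by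
  constructor
  · rintro x₀ ⟨f, hfH, ⟨x', hx'B, hx'ne⟩, hatt⟩
    have hfA := hH hfH
    have hfb : MemAb f := by rcases hA with rfl | rfl; exacts [hfA, hfA.1]
    obtain ⟨hcont, ⟨C, hC⟩, hdiff⟩ := hfb
    have hM : 0 < supNorm f :=
      lt_of_lt_of_le (norm_pos_iff.2 hx'ne) (norm_le_supNorm_s14 hC hx'B)
    obtain ⟨xs, hxs, hxst⟩ := exists_maximizing hC
    obtain ⟨α, φ, hφ, hα, hconv⟩ := hatt xs hxs hxst
    have hsub : ∀ n, xs (φ n) ∈ Metric.closedBall (0 : X) 1 := fun n => hxs _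
    have hz₀B : α • x₀ ∈ Metric.closedBall (0 : X) 1 :=
      Metric.isClosed_closedBall.mem_of_tendsto hconv (Filter.Eventually.of_forall hsub)
    have hfz : ‖f (α • x₀)‖ = supNorm f :=
      tendsto_nhds_unique ((tendsto_comp_ball hcont hsub hz₀B hconv).norm)
        (hxst.comp hφ.tendsto_atTop)
    by_cases hX : ∀ x : X, x = 0
    · refine ⟨fun _ => f x', ?_, ⟨0, Metric.mem_closedBall_self zero_le_one, hx'ne⟩,
        fun ys hys _ => ?_⟩
      · rcases hA with rfl | rfl
        · exact ⟨continuousOn_const, ⟨‖f x'‖, fun _ _ => le_refl _⟩,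
            differentiableOn_const _⟩
        · exact ⟨⟨continuousOn_const, ⟨‖f x'‖, fun _ _ => le_refl _⟩,
            differentiableOn_const _⟩, (by rw [uniformContinuousOn_iff_restrict]; exact uniformContinuous_const)⟩
      · have hys' : ys = fun _ => x₀ := funext fun n => (hX _).trans (hX x₀).symm
        rw [hys']
        exact tendsto_const_nhds
    · push_neg at hX
      obtain ⟨e, he⟩ := hX
      have hαne : α ≠ 0 := by intro h0; rw [h0, norm_zero] at hα; norm_num at hα
      have hx₀1 : ‖x₀‖ = 1 := by
        have hle : ‖x₀‖ ≤ 1 := by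
          have := hz₀B
          rw [Metric.mem_closedBall, dist_zero_right, norm_smul, hα, one_mul] at this
          exact this
        by_contra hne
        have hlt : ‖x₀‖ < 1 := lt_of_le_of_ne hle hne
        have hz₀ball : α • x₀ ∈ Metric.ball (0 : X) 1 := by
          rw [Metric.mem_ball, dist_zero_right, norm_smul, hα, one_mul]; exact hlt
        have hmax : IsMaxOn (norm ∘ f) (Metric.ball (0 : X) 1) (α • x₀) := by
          intro z hz
          show ‖f z‖ ≤ ‖f (α • x₀)‖
          rw [hfz]
          exact norm_le_supNorm_s14 hC (Metric.ball_subset_closedBall hz)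
        have heqn := Complex.norm_eqOn_of_isPreconnected_of_isMaxOn
          (convex_ball (0 : X) 1).isPreconnected Metric.isOpen_ball hdiff hz₀ball hmax
        have hallmax : ∀ z ∈ Metric.ball (0 : X) 1, ∃ γ : ℂ, ‖γ‖ = 1 ∧ z = γ • x₀ := by
          intro z hz
          have h1 : ‖f z‖ = supNorm f := by
            have := heqn hz
            simp only [Function.comp_apply, Function.const_apply] at this
            rw [this, hfz]
          have h2 : Tendsto (fun _ : ℕ => ‖f z‖) atTop (nhds (supNorm f)) := by
            rw [h1]; exact tendsto_const_nhds
          obtain ⟨γ, ψ', _, hγ1, hcv⟩ :=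
            hatt (fun _ => z) (fun _ => Metric.ball_subset_closedBall hz) h2
          exact ⟨γ, hγ1, tendsto_nhds_unique tendsto_const_nhds hcv⟩
        obtain ⟨γ₁, hγ₁n, hγ₁⟩ := hallmax 0 (Metric.mem_ball_self one_pos)
        have hγ₁ne : γ₁ ≠ 0 := by intro h0; rw [h0, norm_zero] at hγ₁n; norm_num at hγ₁n
        have hx₀0 : x₀ = 0 := by
          rcases smul_eq_zero.1 hγ₁.symm with h0 | h0
          · exact absurd h0 hγ₁ne
          · exact h0
        have hene : (2⁻¹ * ‖e‖⁻¹) • e ∈ Metric.ball (0 : X) 1 := by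
          rw [Metric.mem_ball, dist_zero_right, norm_smul, Real.norm_eq_abs,
            abs_of_pos (by have := norm_pos_iff.2 he; positivity), mul_assoc,
            inv_mul_cancel₀ (norm_ne_zero_iff.2 he), mul_one]
          norm_num
        obtain ⟨γ₂, hγ₂n, hγ₂⟩ := hallmax _ hene
        rw [hx₀0, smul_zero] at hγ₂
        have : e ≠ 0 := he
        rcases smul_eq_zero.1 hγ₂ with h0 | h0
        · have : (2⁻¹ : ℝ) * ‖e‖⁻¹ ≠ 0 := by have := norm_pos_iff.2 he; positivity
          exact this h0
        · exact he h0
      obtain ⟨h, hmemAb, hmemUc, hpeak⟩ := construction hcont hC hdiff hα hx₀1 hfz hM hatt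
      refine ⟨h, ?_, hpeak⟩
      rcases hA with rfl | rfl
      · exact hmemAb
      · exact ⟨hmemAb, hmemUc hfA.2⟩
  · rintro x₀ ⟨f, hfA, hpeak⟩
    have hfb : MemAb f := by rcases hA with rfl | rfl; exacts [hfA, hfA.1]
    exact peak_complex_extreme hfb hpeak
end
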